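/- arXiv:1308.3847 — 7 statements merged into one kernel-verified Lean document; each statement's English description precedes it below -/
import Mathlib

section
/- Let F_{p,∞} be the set of binary floating-point numbers with p significant bits and unbounded exponent. Let z ∈ F_{p,∞} with 0 < z < +∞, write z = 1.b₂⋯b_i 0⋯0 × 2^{e_z} with b_i = 1 and k = p − i trailing zeros, and set α = 1.1⋯1 (p ones) × 2^{e_z + k} and β = α ⊕ z (addition with round-to-nearest-even). Then for all x, y ∈ F_{p,∞}, if z = x ⊖ y (floating-point subtraction with round-to-nearest-even) then x ≤ β and y ≤ α; moreover β ⊖ α = β − α = z exactly. -/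
open scoped Classical

/-- Finite binary floating-point numbers with precision `p` and exponent range
`[emin, emax]` (subnormals included), viewed as real numbers. -/
def FF (p : ℕ) (emin emax : ℤ) : Set ℝ :=
  {x | ∃ m e : ℤ, |m| < 2 ^ p ∧ emin ≤ e ∧ e ≤ emax ∧
        x = (m : ℝ) * (2 : ℝ) ^ (e + 1 - (p : ℤ))}

/-- Binary floating-point numbers with precision `p` and unbounded exponent. -/
def FInf (p : ℕ) : Set ℝ :=
  {x | ∃ m e : ℤ, |m| < 2 ^ p ∧ x = (m : ℝ) * (2 : ℝ) ^ e}

/-- `z` has an even least-significant significand bit (canonical representation),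
format with bounded exponents. -/
def evenFF (p : ℕ) (emin emax : ℤ) (z : ℝ) : Prop :=
  ∃ m e : ℤ, |m| < 2 ^ p ∧ emin ≤ e ∧ e ≤ emax ∧
    z = (m : ℝ) * (2 : ℝ) ^ (e + 1 - (p : ℤ)) ∧ 2 ∣ m ∧
    ((2 : ℤ) ^ (p - 1) ≤ |m| ∨ e = emin)

/-- `z` has an odd least-significant significand bit (canonical representation). -/
def oddFF (p : ℕ) (emin emax : ℤ) (z : ℝ) : Prop :=
  ∃ m e : ℤ, |m| < 2 ^ p ∧ emin ≤ e ∧ e ≤ emax ∧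
    z = (m : ℝ) * (2 : ℝ) ^ (e + 1 - (p : ℤ)) ∧ ¬ 2 ∣ m ∧
    ((2 : ℤ) ^ (p - 1) ≤ |m| ∨ e = emin)

/-- Evenness of the significand for the unbounded-exponent format. -/
def evenInf (p : ℕ) (z : ℝ) : Prop :=
  ∃ m e : ℤ, z = (m : ℝ) * (2 : ℝ) ^ e ∧ 2 ∣ m ∧
    (((2 : ℤ) ^ (p - 1) ≤ |m| ∧ |m| < 2 ^ p) ∨ m = 0)

/-- `rnd` is round-to-nearest with ties-to-even onto the set `F` of representable
numbers, `even` being the evenness predicate used to break ties. -/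
def IsRNE (F : Set ℝ) (even : ℝ → Prop) (rnd : ℝ → ℝ) : Prop :=
  ∀ x : ℝ, rnd x ∈ F ∧ (∀ y ∈ F, |x - rnd x| ≤ |x - y|) ∧
    (∀ y ∈ F, y ≠ rnd x → |x - rnd x| = |x - y| → even (rnd x))

/-- The successor of `x` in the set `F`. -/
noncomputable def succF (F : Set ℝ) (x : ℝ) : ℝ := sInf {y | y ∈ F ∧ x < y}

/-- The predecessor of `x` in the set `F`. -/
noncomputable def predF (F : Set ℝ) (x : ℝ) : ℝ := sSup {y | y ∈ F ∧ y < x}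

/-- The largest finite float, `f_max = (2 - 2^(1-p)) * 2^emax`. -/
noncomputable def fmax (p : ℕ) (emax : ℤ) : ℝ :=
  (2 - (2 : ℝ) ^ (1 - (p : ℤ))) * (2 : ℝ) ^ emax

/-- The smallest positive (subnormal) float, `f_min = 2^(emin+1-p)`. -/
noncomputable def fminF (p : ℕ) (emin : ℤ) : ℝ := (2 : ℝ) ^ (emin + 1 - (p : ℤ))

lemma rne_fix {F : Set ℝ} {ev : ℝ → Prop} {rnd : ℝ → ℝ}
    (h : IsRNE F ev rnd) {x : ℝ} (hx : x ∈ F) : rnd x = x := by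
  have h2 := (h x).2.1 x hx
  simp only [sub_self, abs_zero] at h2
  have h3 : |x - rnd x| = 0 := le_antisymm h2 (abs_nonneg _)
  exact (sub_eq_zero.mp (abs_eq_zero.mp h3)).symm

lemma rne_half {F : Set ℝ} {ev : ℝ → Prop} {rnd : ℝ → ℝ}
    (h : IsRNE F ev rnd) {t z u : ℝ} (hu : 0 < u)
    (hz : rnd t = z) (h1 : z + u ∈ F) (h2 : z - u ∈ F) :
    |t - z| ≤ u / 2 := by
  have a1 := (h t).2.1 (z + u) h1
  have a2 := (h t).2.1 (z - u) h2
  rw [hz] at a1 a2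
  have s1 : (t - z) ^ 2 ≤ (t - (z + u)) ^ 2 := by
    have := pow_le_pow_left₀ (abs_nonneg (t - z)) a1 2
    simpa [sq_abs] using this
  have s2 : (t - z) ^ 2 ≤ (t - (z - u)) ^ 2 := by
    have := pow_le_pow_left₀ (abs_nonneg (t - z)) a2 2
    simpa [sq_abs] using this
  rw [abs_le]
  constructor <;> nlinarith

lemma finf_scaled {p : ℕ} (hp : 1 ≤ p) {m : ℤ} (hm : |m| ≤ 2 ^ p) (E : ℤ) :
    (m : ℝ) * (2 : ℝ) ^ E ∈ FInf p := by
  rcases lt_or_eq_of_le hm with h | h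
  · exact ⟨m, E, h, rfl⟩
  · have hd : (2 : ℤ) ∣ m := by
      have h2 : (2 : ℤ) ∣ 2 ^ p := dvd_pow_self 2 (by omega)
      rcases (abs_eq (by positivity : (0:ℤ) ≤ 2 ^ p)).mp h with h1 | h1
      · exact h1 ▸ h2
      · exact h1 ▸ (dvd_neg.mpr h2)
    obtain ⟨q, rfl⟩ := hd
    refine ⟨q, E + 1, ?_, ?_⟩
    · have hq : 2 * |q| = 2 ^ p := by rw [← abs_two, ← abs_mul]; exact h
      have h1 : (2:ℤ) ^ (p-1) < 2 ^ p := by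
        apply pow_lt_pow_right₀ (by norm_num) (by omega)
      have h2 : (2:ℤ) ^ p = 2 * 2 ^ (p-1) := by
        conv_lhs => rw [show p = p - 1 + 1 by omega]
        rw [pow_succ']
      omega
    · push_cast
      rw [zpow_add₀ (by norm_num : (2:ℝ) ≠ 0)]
      ring

lemma finf_mult {p : ℕ} {y : ℝ} (hy : y ∈ FInf p) {c : ℤ}
    (h : ((2 ^ p - 1 : ℤ) : ℝ) * (2 : ℝ) ^ c < y) :
    ∃ n : ℤ, y = (n : ℝ) * (2 : ℝ) ^ (c + 1) := by
  obtain ⟨m, e, hm, rfl⟩ := hy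
  by_cases he : c + 1 ≤ e
  · refine ⟨m * 2 ^ (e - (c + 1)).toNat, ?_⟩
    push_cast
    rw [mul_assoc, ← zpow_natCast (2:ℝ) (e - (c+1)).toNat,
      Int.toNat_of_nonneg (by omega), ← zpow_add₀ (by norm_num : (2:ℝ) ≠ 0)]
    norm_num
  · exfalso
    have hm' : m ≤ 2 ^ p - 1 := by have := (abs_lt.mp hm).2; omega
    have h1 : (m : ℝ) * 2 ^ e ≤ ((2 ^ p - 1 : ℤ) : ℝ) * 2 ^ e :=
      mul_le_mul_of_nonneg_right (by exact_mod_cast hm') (le_of_lt (zpow_pos (by norm_num) e))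
    have h2 : ((2 ^ p - 1 : ℤ) : ℝ) * 2 ^ e ≤ ((2 ^ p - 1 : ℤ) : ℝ) * 2 ^ c := by
      apply mul_le_mul_of_nonneg_left
      · apply zpow_le_zpow_right₀ (by norm_num) (by omega)
      · have : (1:ℤ) ≤ 2 ^ p := one_le_pow₀ (by norm_num)
        push_cast
        have : (1:ℝ) ≤ (2:ℝ) ^ p := by exact_mod_cast this
        linarith
    linarith

set_option maxHeartbeats 1000000 in
/-- Marre-Michel property (Proposition 1): for `z ∈ F_{p,∞}` with `0 < z < +∞`,
`z = 1.b₂⋯b_i0⋯0 × 2^ez` (`b_i = 1`, `k = p - i` trailing zeros),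
`α = 1.1⋯1 × 2^(ez+k)` and `β = α ⊕ z`, every `x, y` with `z = x ⊖ y` satisfy
`x ≤ β` and `y ≤ α`, and `β ⊖ α = β - α = z` exactly. -/
theorem marre_michel_unbounded (p : ℕ) (hp : 2 ≤ p) (rnd : ℝ → ℝ)
    (hrnd : IsRNE (FInf p) (evenInf p) rnd)
    (z α β : ℝ) (ez : ℤ) (k : ℕ) (a : ℤ)
    (hk : k ≤ p - 1)
    (hlb : (2 : ℤ) ^ (p - 1) ≤ (2 * a + 1) * 2 ^ k)
    (hub : (2 * a + 1) * 2 ^ k < (2 : ℤ) ^ p)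
    (hz : z = (((2 * a + 1) * 2 ^ k : ℤ) : ℝ) * (2 : ℝ) ^ (ez + 1 - (p : ℤ)))
    (hzpos : 0 < z)
    (halpha : α = (((2 : ℤ) ^ p - 1 : ℤ) : ℝ) * (2 : ℝ) ^ (ez + (k : ℤ) + 1 - (p : ℤ)))
    (hbeta : β = rnd (α + z)) :
    (∀ x ∈ FInf p, ∀ y ∈ FInf p, rnd (x - y) = z → x ≤ β ∧ y ≤ α) ∧
      rnd (β - α) = z ∧ β - α = z := by
  have hne : (2:ℝ) ≠ 0 := by norm_num
  set E : ℤ := ez + 1 - (p : ℤ) with hE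
  set c : ℤ := E + k with hc
  clear_value c E
  have hk1 : (1:ℤ) ≤ 2 ^ k := one_le_pow₀ (by norm_num)
  have hppos : (0:ℤ) < 2 ^ (p-1) := by positivity
  have hpk : (2:ℤ) ^ p = 2 * 2 ^ (p - 1) := by
    conv_lhs => rw [show p = p - 1 + 1 by omega]
    rw [pow_succ']
  have ha0 : 0 ≤ a := by
    by_contra h
    push_neg at h
    have h1 : (2*a+1) * 2^k ≤ (-1) * 2^k :=
      mul_le_mul_of_nonneg_right (by omega) (by positivity)
    linarith
  have ha1 : a < 2 ^ (p - 1) := by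
    by_contra h
    push_neg at h
    have h1 : (2*a+1) * 1 ≤ (2*a+1) * 2^k :=
      mul_le_mul_of_nonneg_left hk1 (by linarith)
    linarith
  have hM0 : (0:ℤ) ≤ (2*a+1) * 2^k := mul_nonneg (by linarith) (by positivity)
  have hcpos : (0:ℝ) < (2:ℝ) ^ c := zpow_pos (by norm_num) c
  have hEpos : (0:ℝ) < (2:ℝ) ^ E := zpow_pos (by norm_num) E
  have hEc : (2:ℝ) ^ E ≤ (2:ℝ) ^ c := zpow_le_zpow_right₀ (by norm_num) (by omega)
  have hsplit : (2:ℝ) ^ c = (2:ℝ) ^ E * (2:ℝ) ^ (k:ℕ) := by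
    rw [hc, zpow_add₀ hne, zpow_natCast]
  have hzc : z = ((2*a+1 : ℤ) : ℝ) * (2:ℝ) ^ c := by
    rw [hz, hsplit]; push_cast; ring
  have halc : α = ((2^p - 1 : ℤ) : ℝ) * (2:ℝ) ^ c := by
    rw [halpha, show ez + (k:ℤ) + 1 - (p:ℤ) = c by omega]
  have h2R : (2:ℝ) ^ p = 2 * 2 ^ (p-1) := by exact_mod_cast hpk
  have hB1 : |(2:ℤ)^(p-1) + a| ≤ 2 ^ p := by
    rw [abs_of_nonneg (by linarith)]; linarith
  have hsum : α + z = (((2:ℤ)^(p-1) + a : ℤ) : ℝ) * (2:ℝ) ^ (c+1) := by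
    rw [halc, hzc, zpow_add₀ hne]
    push_cast
    rw [h2R]
    ring
  have hmem_sum : α + z ∈ FInf p := by
    rw [hsum]; exact finf_scaled (p := p) (by omega) hB1 (c+1)
  have hbeq : β = α + z := by rw [hbeta, rne_fix hrnd hmem_sum]
  have hbz : β - α = z := by linarith
  have hzmem : z ∈ FInf p := ⟨(2*a+1)*2^k, E,
    by rw [abs_of_nonneg hM0]; exact hub, hz⟩
  have hrz : rnd (β - α) = z := by rw [hbz, rne_fix hrnd hzmem]
  refine ⟨?_, hrz, hbz⟩
  intro x hx y hy hxy
  have hzu_mem : z + (2:ℝ)^E ∈ FInf p := by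
    have he : z + (2:ℝ)^E = (((2*a+1)*2^k + 1 : ℤ):ℝ) * (2:ℝ)^E := by
      rw [hz]; push_cast; ring
    rw [he]
    exact finf_scaled (p := p) (by omega) (by rw [abs_of_nonneg (by omega)]; omega) E
  have hzd_mem : z - (2:ℝ)^E ∈ FInf p := by
    have he : z - (2:ℝ)^E = (((2*a+1)*2^k - 1 : ℤ):ℝ) * (2:ℝ)^E := by
      rw [hz]; push_cast; ring
    rw [he]
    exact finf_scaled (p := p) (by omega) (by rw [abs_of_nonneg (by omega)]; omega) E
  have habs : |x - y - z| ≤ (2:ℝ)^E / 2 := rne_half hrnd hEpos hxy hzu_mem hzd_mem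
  have habs1 := (abs_le.mp habs).1
  have habs2 := (abs_le.mp habs).2
  have hz2 : (2:ℝ)^c ≤ z := by
    rw [hzc]
    have : (1:ℝ) ≤ ((2*a+1 : ℤ):ℝ) := by exact_mod_cast (by omega : (1:ℤ) ≤ 2*a+1)
    nlinarith
  have hya : y ≤ α := by
    by_contra hgt
    push_neg at hgt
    obtain ⟨ny, hny⟩ := finf_mult hy (by rw [← halc]; exact hgt)
    have htpos : 0 < x - y := by linarith
    have hxgt : ((2^p - 1 : ℤ):ℝ) * (2:ℝ)^c < x := by
      rw [← halc]; linarith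
    obtain ⟨nx, hnx⟩ := finf_mult hx hxgt
    have hjne : 2*(nx - ny) - (2*a+1) ≠ 0 := by omega
    have hj1 : (1:ℝ) ≤ |((2*(nx - ny) - (2*a+1) : ℤ):ℝ)| := by
      have h1 : (1:ℤ) ≤ |2*(nx - ny) - (2*a+1)| := by
        rcases abs_cases (2*(nx - ny) - (2*a+1)) with ⟨h2,_⟩|⟨h2,_⟩ <;> omega
      calc (1:ℝ) = ((1:ℤ):ℝ) := by norm_num
        _ ≤ ((|2*(nx - ny) - (2*a+1)| : ℤ):ℝ) := by exact_mod_cast h1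
        _ = |((2*(nx - ny) - (2*a+1) : ℤ):ℝ)| := by push_cast; rfl
    have hdiff : x - y - z = ((2*(nx - ny) - (2*a+1) : ℤ):ℝ) * (2:ℝ)^c := by
      rw [hnx, hny, hzc, zpow_add_one₀ hne]
      push_cast
      ring
    rw [hdiff, abs_mul, abs_of_pos hcpos] at habs
    have hmm := mul_le_mul_of_nonneg_right hj1 hcpos.le
    rw [one_mul] at hmm
    linarith
  refine ⟨?_, hya⟩
  by_contra hgt
  push_neg at hgt
  have hbgt : ((2^p - 1 : ℤ):ℝ) * (2:ℝ)^c < β := by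
    rw [hbeq, hsum, zpow_add_one₀ hne]
    push_cast
    rw [h2R]
    have haR : (0:ℝ) ≤ (a:ℝ) := by exact_mod_cast ha0
    nlinarith [mul_pos (show (0:ℝ) < 2*(a:ℝ)+1 by linarith) hcpos]
  obtain ⟨nx, hnx⟩ := finf_mult hx (lt_trans hbgt hgt)
  have hc1pos : (0:ℝ) < (2:ℝ)^(c+1) := zpow_pos (by norm_num) (c+1)
  have hnxB : (2:ℤ)^(p-1) + a + 1 ≤ nx := by
    have h1 : (((2:ℤ)^(p-1) + a : ℤ):ℝ) * 2^(c+1) < (nx:ℝ) * 2^(c+1) := by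
      rw [← hsum, ← hbeq, ← hnx]; exact hgt
    have h2 : (((2:ℤ)^(p-1) + a : ℤ):ℝ) < (nx:ℝ) := lt_of_mul_lt_mul_right (by linarith) hc1pos.le
    have h3 : (2:ℤ)^(p-1) + a < nx := by exact_mod_cast h2
    omega
  have hx_lb : (((2:ℤ)^(p-1) + a + 1 : ℤ):ℝ) * (2:ℝ)^(c+1) ≤ x := by
    rw [hnx]
    exact mul_le_mul_of_nonneg_right (by exact_mod_cast hnxB) hc1pos.le
  have hyα : y ≤ ((2^p - 1 : ℤ):ℝ) * (2:ℝ)^c := by rw [← halc]; exact hya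
  have hkey : (((2:ℤ)^(p-1) + a + 1 : ℤ):ℝ) * (2:ℝ)^(c+1) - ((2^p - 1 : ℤ):ℝ)*(2:ℝ)^c
      = ((2*a+3 : ℤ):ℝ) * (2:ℝ)^c := by
    rw [zpow_add_one₀ hne]
    push_cast
    rw [h2R]
    ring
  have hkey2 : x - y ≤ ((2*a+1 : ℤ):ℝ) * (2:ℝ)^c + (2:ℝ)^E/2 := by
    rw [← hzc]; linarith
  have hfin : ((2*a+3 : ℤ):ℝ) * (2:ℝ)^c ≤ x - y := by linarith
  push_cast at hfin hkey2
  nlinarith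
end

section
/- Let z be a subnormal IEEE 754 number with 0 < z < f_min^nor = 2^{e_min}, written z = 0.0⋯01 b_{j+1}⋯b_i 0⋯0 × 2^{e_min} with b_i = 1 and k = p − i trailing zeros. Set α = 1.1⋯1 (p ones) × 2^{e_min + k} and β = α ⊕ z. Then for all floats x, y (including subnormals), z = x ⊖ y implies x ≤ β and y ≤ α, and β ⊖ α = β − α = z exactly. -/
open scoped Classical

set_option maxHeartbeats 1000000

lemma mm_rnd_fixed {F : Set ℝ} {even : ℝ → Prop} {rnd : ℝ → ℝ} (h : IsRNE F even rnd)
    {x : ℝ} (hx : x ∈ F) : rnd x = x := by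
  obtain ⟨_, h2, _⟩ := h x
  have h3 := h2 x hx
  simp only [sub_self, abs_zero] at h3
  have h4 := abs_nonneg (x - rnd x)
  have h5 : |x - rnd x| = 0 := le_antisymm h3 h4
  have := abs_eq_zero.mp h5
  linarith

lemma mm_half_ulp {F : Set ℝ} {even : ℝ → Prop} {rnd : ℝ → ℝ} (h : IsRNE F even rnd)
    {t z u : ℝ} (hz : rnd t = z) (h1 : z - u ∈ F) (h2 : z + u ∈ F) (hu : 0 < u) :
    |t - z| ≤ u / 2 := by
  obtain ⟨_, hmin, _⟩ := h t
  have ha := hmin _ h1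
  have hb := hmin _ h2
  rw [hz] at ha hb
  rw [show t - (z - u) = t - z + u by ring] at ha
  rw [show t - (z + u) = t - z - u by ring] at hb
  have ha2 : (t - z) ^ 2 ≤ (t - z + u) ^ 2 := by
    have := pow_le_pow_left₀ (abs_nonneg (t - z)) ha 2
    simpa [sq_abs] using this
  have hb2 : (t - z) ^ 2 ≤ (t - z - u) ^ 2 := by
    have := pow_le_pow_left₀ (abs_nonneg (t - z)) hb 2
    simpa [sq_abs] using this
  rw [abs_le]
  constructor <;> nlinarith

lemma mm_grid {p : ℕ} {emin emax : ℤ} {w : ℝ} (hw : w ∈ FF p emin emax) (E : ℤ)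
    (hE : (2:ℝ) ^ E ≤ |w|) : ∃ M : ℤ, w = (M : ℝ) * (2:ℝ) ^ (E + 1 - (p : ℤ)) := by
  obtain ⟨m, e, hm, _, _, hwe⟩ := hw
  have hEe : E ≤ e := by
    by_contra hcon
    push_neg at hcon
    have hmr : |(m:ℝ)| < (2:ℝ) ^ (p:ℤ) := by
      rw [← Int.cast_abs]
      exact_mod_cast hm
    have h1 : |w| = |(m:ℝ)| * (2:ℝ) ^ (e + 1 - (p:ℤ)) := by
      rw [hwe, abs_mul, abs_of_pos (show (0:ℝ) < (2:ℝ)^(e+1-(p:ℤ)) from by positivity)]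
    have h2 : |w| < (2:ℝ) ^ (e + 1) := by
      rw [h1]
      calc |(m:ℝ)| * (2:ℝ) ^ (e + 1 - (p:ℤ)) < (2:ℝ)^(p:ℤ) * (2:ℝ) ^ (e + 1 - (p:ℤ)) := by
            exact mul_lt_mul_of_pos_right hmr (by positivity)
        _ = (2:ℝ) ^ (e+1) := by
            rw [← zpow_add₀ (two_ne_zero)]; ring_nf
    have h3 : (2:ℝ) ^ (e+1) ≤ (2:ℝ) ^ E :=
      zpow_le_zpow_right₀ (by norm_num) (by omega)
    linarith
  refine ⟨m * 2 ^ (e - E).toNat, ?_⟩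
  rw [hwe]
  push_cast
  rw [← zpow_natCast (2:ℝ), Int.toNat_of_nonneg (by omega), mul_assoc,
    ← zpow_add₀ (two_ne_zero : (2:ℝ) ≠ 0)]
  congr 2
  ring

/-- Marre-Michel property extended to subnormals: for a subnormal
`z = 0.0⋯01b_{j+1}⋯b_i0⋯0 × 2^emin` (`b_i = 1`, `k = p - i` trailing zeros),
with `α = 1.1⋯1 × 2^(emin+k)` and `β = α ⊕ z`, every `x, y` with `z = x ⊖ y`
satisfy `x ≤ β` and `y ≤ α`, and `β ⊖ α = β - α = z` exactly. -/
theorem marre_michel_subnormal (p : ℕ) (hp : 2 ≤ p) (emin emax : ℤ)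
    (rnd : ℝ → ℝ)
    (hrnd : IsRNE (FF p emin emax) (evenFF p emin emax) rnd)
    (z α β : ℝ) (k : ℕ) (a : ℤ)
    (hrange : emin + (k : ℤ) + 1 ≤ emax)
    (hlb : 0 < (2 * a + 1) * 2 ^ k)
    (hub : (2 * a + 1) * 2 ^ k < (2 : ℤ) ^ (p - 1))
    (hz : z = (((2 * a + 1) * 2 ^ k : ℤ) : ℝ) * (2 : ℝ) ^ (emin + 1 - (p : ℤ)))
    (hzpos : 0 < z) (hzsub : z < (2 : ℝ) ^ emin)
    (halpha : α = (((2 : ℤ) ^ p - 1 : ℤ) : ℝ) * (2 : ℝ) ^ (emin + (k : ℤ) + 1 - (p : ℤ)))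
    (hbeta : β = rnd (α + z)) :
    (∀ x ∈ FF p emin emax, ∀ y ∈ FF p emin emax,
        rnd (x - y) = z → x ≤ β ∧ y ≤ α) ∧
      rnd (β - α) = z ∧ β - α = z := by
  -- basic integer facts
  have hk0 : (0:ℤ) < 2 ^ k := by positivity
  have hk1 : (1:ℤ) ≤ 2 ^ k := hk0
  have ha0 : 0 ≤ a := by
    by_contra hcon
    push_neg at hcon
    have h1 : 2 * a + 1 ≤ -1 := by omega
    nlinarith
  have hm1 : 1 ≤ (2 * a + 1) * 2 ^ k := hlb
  have h2a1 : 2 * a + 1 < 2 ^ (p - 1) := by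
    have h1 : 2 * a + 1 ≤ (2 * a + 1) * 2 ^ k :=
      le_mul_of_one_le_right (by omega) hk1
    omega
  have hpp : (2:ℤ) ^ (p - 1) < 2 ^ p := by
    exact pow_lt_pow_right₀ one_lt_two (by omega)
  have hpow : (2:ℤ) ^ p = 2 ^ (p - 1) * 2 := by
    conv_lhs => rw [show p = p - 1 + 1 by omega]
    rw [pow_succ]
  have hminmax : emin ≤ emax := by
    have : (0:ℤ) ≤ (k:ℤ) := Int.natCast_nonneg k
    omega
  -- real abbreviations
  set u : ℝ := (2:ℝ) ^ (emin + 1 - (p:ℤ)) with hu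
  have hupos : (0:ℝ) < u := by positivity
  have hwu : (2:ℝ) ^ (emin + (k:ℤ) + 1 - (p:ℤ)) = ((2:ℤ)^k : ℝ) * u := by
    rw [hu, show ((2:ℤ)^k : ℝ) = (2:ℝ) ^ (k:ℤ) by push_cast; rw [zpow_natCast],
      ← zpow_add₀ (two_ne_zero : (2:ℝ) ≠ 0)]
    congr 1; ring
  have hdu : (2:ℝ) ^ (emin + (k:ℤ) + 2 - (p:ℤ)) = 2 * (((2:ℤ)^k : ℝ) * u) := by
    rw [show emin + (k:ℤ) + 2 - (p:ℤ) = 1 + (emin + (k:ℤ) + 1 - (p:ℤ)) by ring,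
      zpow_add₀ (two_ne_zero : (2:ℝ) ≠ 0), zpow_one, hwu]
  have hpR : (2:ℝ) ^ p = 2 * (2:ℝ) ^ (p - 1) := by
    conv_lhs => rw [show p = p - 1 + 1 by omega]
    rw [pow_succ]; ring
  -- memberships
  have hzF : z ∈ FF p emin emax := by
    refine ⟨(2 * a + 1) * 2 ^ k, emin, ?_, le_refl _, hminmax, hz⟩
    rw [abs_of_pos hlb]; omega
  have hzmF : z - u ∈ FF p emin emax := by
    refine ⟨(2 * a + 1) * 2 ^ k - 1, emin, ?_, le_refl _, hminmax, ?_⟩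
    · rw [abs_of_nonneg (by omega)]; omega
    · rw [hz, hu]; push_cast; ring
  have hzpF : z + u ∈ FF p emin emax := by
    refine ⟨(2 * a + 1) * 2 ^ k + 1, emin, ?_, le_refl _, hminmax, ?_⟩
    · rw [abs_of_nonneg (by omega)]; omega
    · rw [hz, hu]; push_cast; ring
  -- β = α + z
  have habz : α + z = (((2:ℤ)^(p-1) + a : ℤ) : ℝ) * (2:ℝ) ^ (emin + (k:ℤ) + 2 - (p:ℤ)) := by
    rw [halpha, hz, hwu, hdu, hu]
    push_cast
    rw [hpR]
    ring
  have habF : α + z ∈ FF p emin emax := by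
    refine ⟨(2:ℤ)^(p-1) + a, emin + (k:ℤ) + 1, ?_, by omega, hrange, ?_⟩
    · rw [abs_of_nonneg (by positivity)]; omega
    · rw [habz]; congr 2; ring
  have hβ : β = α + z := by rw [hbeta, mm_rnd_fixed hrnd habF]
  -- key real scaling facts
  have hEk : (2:ℝ) ^ (emin + (k:ℤ)) = ((2:ℤ)^(p-1) : ℝ) * ((2:ℝ) ^ (emin + (k:ℤ) + 1 - (p:ℤ))) := by
    rw [show ((2:ℤ)^(p-1) : ℝ) = (2:ℝ) ^ (((p-1:ℕ)):ℤ) by push_cast; rw [zpow_natCast],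
      ← zpow_add₀ (two_ne_zero : (2:ℝ) ≠ 0)]
    congr 1
    omega
  have hEk1 : (2:ℝ) ^ (emin + (k:ℤ) + 1) = ((2:ℤ)^p : ℝ) * ((2:ℝ) ^ (emin + (k:ℤ) + 1 - (p:ℤ))) := by
    rw [show ((2:ℤ)^p : ℝ) = (2:ℝ) ^ ((p:ℕ):ℤ) by push_cast; rw [zpow_natCast],
      ← zpow_add₀ (two_ne_zero : (2:ℝ) ≠ 0)]
    congr 1
    ring
  have hwpos : (0:ℝ) < (2:ℝ) ^ (emin + (k:ℤ) + 1 - (p:ℤ)) := by positivity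
  have hppR : ((2:ℤ)^(p-1) : ℝ) < ((2:ℤ)^p : ℝ) := by exact_mod_cast hpp
  have hαge : (2:ℝ) ^ (emin + (k:ℤ)) ≤ α := by
    rw [halpha, hEk]
    have : ((2:ℤ)^(p-1) : ℝ) ≤ (((2:ℤ)^p - 1 : ℤ) : ℝ) := by exact_mod_cast (by omega : (2:ℤ)^(p-1) ≤ 2^p - 1)
    exact mul_le_mul_of_nonneg_right this (le_of_lt hwpos)
  have hc1 : (1:ℝ) ≤ (((2*a+1)*2^k : ℤ) : ℝ) := by exact_mod_cast hm1
  have hzu : (u : ℝ) ≤ z := by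
    rw [hz]
    calc u = 1 * u := by ring
      _ ≤ _ := mul_le_mul_of_nonneg_right hc1 hupos.le
  constructor
  · -- main part
    intro x hx y hy hxy
    have ht := mm_half_ulp hrnd hxy hzmF hzpF hupos
    rw [abs_le] at ht
    obtain ⟨ht1, ht2⟩ := ht
    -- first: y ≤ α
    have hyα : y ≤ α := by
      by_contra hcon
      push_neg at hcon
      -- y ≥ 2^(emin+k+1)
      obtain ⟨My, hMy⟩ := mm_grid hy (emin + (k:ℤ)) (le_trans (le_trans hαge (le_of_lt hcon)) (le_abs_self y))
      have hMyge : (2:ℤ)^p ≤ My := by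
        have h1 : (((2:ℤ)^p - 1 : ℤ) : ℝ) * ((2:ℝ) ^ (emin + (k:ℤ) + 1 - (p:ℤ))) < (My : ℝ) * ((2:ℝ) ^ (emin + (k:ℤ) + 1 - (p:ℤ))) := by
          rw [← halpha, ← hMy]; exact hcon
        have h2 : (((2:ℤ)^p - 1 : ℤ) : ℝ) < (My : ℝ) := lt_of_mul_lt_mul_right h1 (le_of_lt hwpos)
        have : (2:ℤ)^p - 1 < My := by exact_mod_cast h2
        omega
      have hy2 : (2:ℝ) ^ (emin + (k:ℤ) + 1) ≤ y := by
        rw [hMy, hEk1]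
        exact mul_le_mul_of_nonneg_right (by exact_mod_cast hMyge) (le_of_lt hwpos)
      -- x > y
      have hxgty : y < x := by linarith [hzu, hupos, ht1]
      have hx2 : (2:ℝ) ^ (emin + (k:ℤ) + 1) ≤ |x| :=
        le_trans (le_of_lt (lt_of_le_of_lt hy2 hxgty)) (le_abs_self x)
      obtain ⟨Mx, hMx⟩ := mm_grid hx (emin + (k:ℤ) + 1) hx2
      obtain ⟨My', hMy'⟩ := mm_grid hy (emin + (k:ℤ) + 1) (le_trans hy2 (le_abs_self y))
      rw [show emin + (k:ℤ) + 1 + 1 - (p:ℤ) = emin + (k:ℤ) + 2 - (p:ℤ) by ring] at hMx hMy'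
      -- x - y = (Mx - My') * 2^(k+1) * u, contradiction with half-ulp interval
      have hdiff : x - y - z = (((Mx - My') * 2^(k+1) - (2*a+1)*2^k : ℤ) : ℝ) * u := by
        rw [hMx, hMy', hz, hdu]
        push_cast
        ring
      set c : ℤ := (Mx - My') * 2^(k+1) - (2*a+1)*2^k with hc
      have hcabs : |(c:ℝ)| ≤ 1/2 := by
        have h1 : |(c:ℝ) * u| ≤ u / 2 := by
          rw [← hdiff]; rw [abs_le]; constructor <;> linarith
        rw [abs_mul, abs_of_pos hupos] at h1
        nlinarith [abs_nonneg ((c:ℝ))]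
      have hc0 : c = 0 := by
        have h0 : |c| ≤ 0 := by
          by_contra h
          push_neg at h
          have h1 : (1:ℤ) ≤ |c| := by omega
          have h2 : (1:ℝ) ≤ |(c:ℝ)| := by rw [← Int.cast_abs]; exact_mod_cast h1
          linarith
        exact abs_eq_zero.mp (le_antisymm h0 (abs_nonneg c))
      rw [hc] at hc0
      have : (2:ℤ)^k * (2 * (Mx - My') - (2*a+1)) = 0 := by
        rw [pow_succ] at hc0
        linear_combination hc0
      have h3 : 2 * (Mx - My') - (2*a+1) = 0 := by
        rcases mul_eq_zero.mp this with h | h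
        · omega
        · exact h
      omega
    refine ⟨?_, hyα⟩
    -- x ≤ β
    by_contra hcon
    push_neg at hcon
    rw [hβ] at hcon
    have hβge : (2:ℝ) ^ (emin + (k:ℤ) + 1) ≤ α + z := by
      rw [habz, hdu, hEk1, hwu]
      have h1 : ((2:ℤ)^p : ℝ) ≤ (((2:ℤ)^(p-1) + a : ℤ) : ℝ) * 2 := by
        exact_mod_cast (by omega : (2:ℤ)^p ≤ ((2:ℤ)^(p-1) + a) * 2)
      have hv : (0:ℝ) < ((2:ℤ)^k : ℝ) * u := by
        have : (0:ℝ) < ((2:ℤ)^k : ℝ) := by exact_mod_cast hk0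
        positivity
      nlinarith [hv, h1]
    obtain ⟨Mx, hMx⟩ := mm_grid hx (emin + (k:ℤ) + 1)
      (le_trans (le_trans hβge hcon.le) (le_abs_self x))
    rw [show emin + (k:ℤ) + 1 + 1 - (p:ℤ) = emin + (k:ℤ) + 2 - (p:ℤ) by ring] at hMx
    have hdpos : (0:ℝ) < (2:ℝ) ^ (emin + (k:ℤ) + 2 - (p:ℤ)) := by positivity
    have hMxge : (2:ℤ)^(p-1) + a + 1 ≤ Mx := by
      have h1 : (((2:ℤ)^(p-1) + a : ℤ) : ℝ) * (2:ℝ) ^ (emin + (k:ℤ) + 2 - (p:ℤ)) <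
          (Mx : ℝ) * (2:ℝ) ^ (emin + (k:ℤ) + 2 - (p:ℤ)) := by
        rw [← habz, ← hMx]; exact hcon
      have h2 := lt_of_mul_lt_mul_right h1 hdpos.le
      have h3 : (2:ℤ)^(p-1) + a < Mx := by exact_mod_cast h2
      omega
    have hxge : α + z + (2:ℝ) ^ (emin + (k:ℤ) + 2 - (p:ℤ)) ≤ x := by
      rw [hMx, habz]
      have h4 : (((2:ℤ)^(p-1) + a + 1 : ℤ) : ℝ) ≤ (Mx : ℝ) := by exact_mod_cast hMxge
      have h5 := mul_le_mul_of_nonneg_right h4 hdpos.le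
      push_cast at h5 ⊢
      linarith
    have hd2 : u / 2 < (2:ℝ) ^ (emin + (k:ℤ) + 2 - (p:ℤ)) := by
      rw [hdu]
      have h6 : (1:ℝ) ≤ ((2:ℤ)^k : ℝ) := by exact_mod_cast hk1
      nlinarith [hupos]
    linarith [ht2, hxge, hd2, hyα]
  · constructor
    · rw [hβ, show α + z - α = z by ring, mm_rnd_fixed hrnd hzF]
    · rw [hβ]; ring
end

section
/- In IEEE 754 binary arithmetic with round-to-nearest ties-to-even, for every float z with |z| ≤ 1 (including subnormals and signed zeros), (z ⊗ f_max) ⊘ f_max = z, where f_max = (2 − 2^{1−p})·2^{e_max} is the largest finite float. -/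
open scoped Classical

namespace MDF

variable {p : ℕ} {emin emax : ℤ}

lemma two_zpow_pos (a : ℤ) : (0:ℝ) < (2:ℝ) ^ a := zpow_pos (by norm_num) a

lemma zadd (a b : ℤ) : (2:ℝ) ^ (a + b) = 2 ^ a * 2 ^ b :=
  zpow_add₀ (by norm_num) a b

lemma FF_mem (m e : ℤ) (h1 : |m| < 2 ^ p) (h2 : emin ≤ e) (h3 : e ≤ emax) :
    (m : ℝ) * (2:ℝ) ^ (e + 1 - (p:ℤ)) ∈ FF p emin emax := ⟨m, e, h1, h2, h3, rfl⟩

lemma scaled_lt {A B : ℤ} (σ : ℤ) (h : A < B) : (A:ℝ) * 2 ^ σ < (B:ℝ) * 2 ^ σ :=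
  mul_lt_mul_of_pos_right (by exact_mod_cast h) (two_zpow_pos σ)

lemma scaled_le {A B : ℤ} (σ : ℤ) (h : A ≤ B) : (A:ℝ) * 2 ^ σ ≤ (B:ℝ) * 2 ^ σ :=
  mul_le_mul_of_nonneg_right (by exact_mod_cast h) (two_zpow_pos σ).le

lemma scaled_abs (A : ℤ) (σ : ℤ) : |(A:ℝ) * 2 ^ σ| = ((|A| : ℤ) : ℝ) * 2 ^ σ := by
  rw [abs_mul, abs_of_pos (two_zpow_pos σ)]
  norm_cast

lemma fmax_eq : fmax p emax = ((2 ^ p - 1 : ℤ) : ℝ) * 2 ^ (emax + 1 - (p:ℤ)) := by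
  unfold fmax
  rw [show emax + 1 - (p:ℤ) = (1 - (p:ℤ)) + emax by ring, zadd]
  have h : (2:ℝ) ^ ((p:ℤ)) * (2:ℝ) ^ (1 - (p:ℤ)) = 2 := by
    rw [← zadd]; norm_num
  push_cast
  rw [zpow_natCast] at h
  nlinarith [h, two_zpow_pos (1 - (p:ℤ)), two_zpow_pos (emax:ℤ)]

lemma fmax_pos (hp : 1 ≤ p) : 0 < fmax p emax := by
  rw [fmax_eq]
  apply mul_pos _ (two_zpow_pos _)
  have h : (2:ℤ)^1 ≤ 2^p := pow_le_pow_right₀ (by norm_num) hp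
  have h2 : (0:ℤ) < 2^p - 1 := by omega
  exact_mod_cast h2

lemma FF_coarse {y : ℝ} (hy : y ∈ FF p emin emax) (c : ℤ) :
    (∃ n : ℤ, y = (n:ℝ) * (2:ℝ) ^ (c + 1 - (p:ℤ))) ∨ (emin < c ∧ |y| < (2:ℝ) ^ c) := by
  obtain ⟨m, f, h1, h2, h3, rfl⟩ := hy
  rcases le_or_gt c f with h | h
  · left
    refine ⟨m * 2 ^ (f - c).toNat, ?_⟩
    have ht : ((f - c).toNat : ℤ) = f - c := Int.toNat_of_nonneg (by omega)
    push_cast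
    rw [← zpow_natCast (2:ℝ) (f - c).toNat, ht,
      show f + 1 - (p:ℤ) = (f - c) + (c + 1 - (p:ℤ)) by ring, zadd]
    ring
  · right
    refine ⟨by omega, ?_⟩
    rw [abs_mul, abs_of_pos (two_zpow_pos _)]
    have hm : |(m:ℝ)| < (2:ℝ) ^ (p:ℤ) := by
      rw [show ((2:ℝ) ^ (p:ℤ)) = ((2 ^ p : ℤ) : ℝ) by push_cast; rw [zpow_natCast]]
      exact_mod_cast h1
    calc |(m:ℝ)| * 2 ^ (f + 1 - (p:ℤ)) < 2 ^ (p:ℤ) * 2 ^ (f + 1 - (p:ℤ)) :=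
          mul_lt_mul_of_pos_right hm (two_zpow_pos _)
      _ = 2 ^ (f + 1) := by rw [← zadd]; congr 1; ring
      _ ≤ 2 ^ c := zpow_le_zpow_right₀ one_le_two (by omega)

lemma strict_nearest (c : ℤ) (V : ℤ) (x : ℝ)
    (h1 : |x - (V:ℝ) * 2 ^ (c + 1 - (p:ℤ))| < (2:ℝ) ^ (c - (p:ℤ)))
    (h2 : c = emin ∨ (2:ℝ) ^ c + |x - (V:ℝ) * 2 ^ (c + 1 - (p:ℤ))| ≤ x) :
    ∀ y ∈ FF p emin emax, y ≠ (V:ℝ) * 2 ^ (c + 1 - (p:ℤ)) →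
      |x - (V:ℝ) * 2 ^ (c + 1 - (p:ℤ))| < |x - y| := by
  intro y hy hne
  have hδpos : (0:ℝ) < 2 ^ (c + 1 - (p:ℤ)) := two_zpow_pos _
  rcases FF_coarse hy c with ⟨n, rfl⟩ | ⟨hcc, hsmall⟩
  · have hnV : n ≠ V := by
      intro h; exact hne (by rw [h])
    have h3 : (2:ℝ) ^ (c + 1 - (p:ℤ)) ≤ |(n:ℝ) * 2 ^ (c + 1 - (p:ℤ)) - V * 2 ^ (c + 1 - (p:ℤ))| := by
      rw [← sub_mul, abs_mul, abs_of_pos hδpos]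
      have h4 : (1:ℝ) ≤ |(n:ℝ) - V| := by
        have : (1:ℤ) ≤ |n - V| := Int.one_le_abs (sub_ne_zero.mpr hnV)
        calc (1:ℝ) ≤ ((|n - V| : ℤ) : ℝ) := by exact_mod_cast this
          _ = |(n:ℝ) - V| := by push_cast; ring
      nlinarith
    have h4 : |(n:ℝ) * 2 ^ (c + 1 - (p:ℤ)) - V * 2 ^ (c + 1 - (p:ℤ))| ≤
        |x - (V:ℝ) * 2 ^ (c + 1 - (p:ℤ))| + |x - (n:ℝ) * 2 ^ (c + 1 - (p:ℤ))| := by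
      have := abs_sub_abs_le_abs_sub (x - (V:ℝ) * 2 ^ (c + 1 - (p:ℤ))) (x - (n:ℝ) * 2 ^ (c + 1 - (p:ℤ)))
      calc |(n:ℝ) * 2 ^ (c + 1 - (p:ℤ)) - V * 2 ^ (c + 1 - (p:ℤ))|
          = |(x - (V:ℝ) * 2 ^ (c + 1 - (p:ℤ))) - (x - (n:ℝ) * 2 ^ (c + 1 - (p:ℤ)))| := by ring_nf
        _ ≤ _ := abs_sub _ _
    have hhalf : (2:ℝ) ^ (c + 1 - (p:ℤ)) = 2 * 2 ^ (c - (p:ℤ)) := by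
      rw [show c + 1 - (p:ℤ) = 1 + (c - (p:ℤ)) by ring, zadd]; norm_num
    linarith
  · rcases h2 with rfl | h2
    · exact absurd hcc (lt_irrefl _)
    · have hy1 : x - y ≤ |x - y| := le_abs_self _
      have hy2 : y ≤ |y| := le_abs_self _
      linarith

lemma tie_nearest (V : ℤ) (x : ℝ)
    (hx : x = (V:ℝ) * 2 ^ (emin + 1 - (p:ℤ)) - 2 ^ (emin - (p:ℤ))) :
    ∀ y ∈ FF p emin emax, y ≠ ((V - 1 : ℤ):ℝ) * 2 ^ (emin + 1 - (p:ℤ)) →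
      y ≠ (V:ℝ) * 2 ^ (emin + 1 - (p:ℤ)) →
      |x - (V:ℝ) * 2 ^ (emin + 1 - (p:ℤ))| < |x - y| := by
  intro y hy hne1 hne2
  have hη : (0:ℝ) < 2 ^ (emin + 1 - (p:ℤ)) := two_zpow_pos _
  have hhalf : (2:ℝ) ^ (emin + 1 - (p:ℤ)) = 2 * 2 ^ (emin - (p:ℤ)) := by
    rw [show emin + 1 - (p:ℤ) = 1 + (emin - (p:ℤ)) by ring, zadd]; norm_num
  have habs : |x - (V:ℝ) * 2 ^ (emin + 1 - (p:ℤ))| = 2 ^ (emin - (p:ℤ)) := by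
    rw [hx, show (V:ℝ) * 2 ^ (emin + 1 - (p:ℤ)) - 2 ^ (emin - (p:ℤ))
        - (V:ℝ) * 2 ^ (emin + 1 - (p:ℤ)) = -(2 ^ (emin - (p:ℤ))) by ring, abs_neg,
      abs_of_pos (two_zpow_pos _)]
  rw [habs]
  rcases FF_coarse hy emin with ⟨n, rfl⟩ | ⟨hcc, _⟩
  · have hn1 : n ≠ V - 1 := by
      intro h; exact hne1 (by rw [h])
    have hn2 : n ≠ V := by
      intro h; exact hne2 (by rw [h])
    have hcase : n ≤ V - 2 ∨ V + 1 ≤ n := by omega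
    rcases hcase with h | h
    · have hc : ((V:ℝ) - n) ≥ 2 := by
        have : (2:ℤ) ≤ V - n := by omega
        exact_mod_cast this
      have : x - (n:ℝ) * 2 ^ (emin + 1 - (p:ℤ)) ≤ |x - (n:ℝ) * 2 ^ (emin + 1 - (p:ℤ))| :=
        le_abs_self _
      rw [hx] at this ⊢
      nlinarith [two_zpow_pos (emin - (p:ℤ))]
    · have hc : ((n:ℝ) - V) ≥ 1 := by
        have : (1:ℤ) ≤ n - V := by omega
        exact_mod_cast this
      have : (n:ℝ) * 2 ^ (emin + 1 - (p:ℤ)) - x ≤ |x - (n:ℝ) * 2 ^ (emin + 1 - (p:ℤ))| := by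
        rw [abs_sub_comm]; exact le_abs_self _
      rw [hx] at this ⊢
      nlinarith [two_zpow_pos (emin - (p:ℤ))]
  · exact absurd hcc (lt_irrefl _)

lemma abs_sub_div_lt {f v z B : ℝ} (hf : 0 < f) (h : |v - z * f| < B * f) : |v / f - z| < B := by
  rw [show v / f - z = (v - z * f) / f by field_simp, abs_div, abs_of_pos hf, div_lt_iff₀ hf]
  exact h

lemma div_ineq2 {f v z C : ℝ} (hf : 0 < f) (h : C * f + |v - z * f| ≤ v) :
    C + |v / f - z| ≤ v / f := by
  rw [show v / f - z = (v - z * f) / f by field_simp, abs_div, abs_of_pos hf]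
  rw [show C + |v - z * f| / f = (C * f + |v - z * f|) / f by field_simp]
  gcongr

def RndSpec (p : ℕ) (emin emax : ℤ) (x v : ℝ) : Prop :=
  (v ∈ FF p emin emax ∧ ∀ y ∈ FF p emin emax, y ≠ v → |x - v| < |x - y|) ∨
  (∃ a, a ∈ FF p emin emax ∧ v ∈ FF p emin emax ∧ a ≠ v ∧ |x - v| = |x - a| ∧
    ¬ evenFF p emin emax a ∧ evenFF p emin emax v ∧
    ∀ y ∈ FF p emin emax, y ≠ a → y ≠ v → |x - v| < |x - y|)

lemma rnd_of_spec {rnd : ℝ → ℝ} (hrnd : IsRNE (FF p emin emax) (evenFF p emin emax) rnd)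
    {x v : ℝ} (h : RndSpec p emin emax x v) : rnd x = v := by
  obtain ⟨hmem, hmin, htie⟩ := hrnd x
  rcases h with ⟨hv, hstrict⟩ | ⟨a, ha, hv, hav, heq, hodd, _heven, hstrict⟩
  · by_contra hne
    have h1 := hstrict _ hmem hne
    have h2 := hmin v hv
    linarith
  · by_contra hne
    by_cases hra : rnd x = a
    · apply hodd
      rw [← hra]
      apply htie v hv (fun h => hne h.symm)
      have h2 := hmin v hv
      have h3 := hmin a ha
      rw [hra] at h2 h3 ⊢
      linarith [heq.le, heq.ge]
    · have h1 := hstrict _ hmem hra hne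
      have h2 := hmin v hv
      linarith

lemma FF_neg {y : ℝ} (hy : y ∈ FF p emin emax) : -y ∈ FF p emin emax := by
  obtain ⟨m, e, h1, h2, h3, rfl⟩ := hy
  exact ⟨-m, e, by rwa [abs_neg], h2, h3, by push_cast; ring⟩

lemma evenFF_neg {y : ℝ} (hy : evenFF p emin emax y) : evenFF p emin emax (-y) := by
  obtain ⟨m, e, h1, h2, h3, h4, h5, h6⟩ := hy
  exact ⟨-m, e, by rwa [abs_neg], h2, h3, by rw [h4]; push_cast; ring,
    by omega, by rwa [abs_neg]⟩

lemma RndSpec.neg {x v : ℝ} (h : RndSpec p emin emax x v) : RndSpec p emin emax (-x) (-v) := by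
  have key : ∀ a b : ℝ, |(-x) - (-a)| = |x - a| := fun a b => by
    rw [show (-x) - (-a) = -(x - a) by ring, abs_neg]
  have key2 : ∀ a : ℝ, |(-x) - a| = |x - (-a)| := fun a => by
    rw [show (-x) - a = -(x - (-a)) by ring, abs_neg]
  rcases h with ⟨hv, hstrict⟩ | ⟨a, ha, hv, hav, heq, hodd, heven, hstrict⟩
  · left
    refine ⟨FF_neg hv, fun y hy hne => ?_⟩
    rw [key v v, key2 y]
    exact hstrict (-y) (FF_neg hy) (fun h => hne (by rw [← neg_neg y, h]))
  · right
    refine ⟨-a, FF_neg ha, FF_neg hv, fun h => hav (by linarith [neg_injective h]), ?_, ?_, evenFF_neg heven, ?_⟩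
    · rw [key v v, key a a]; exact heq
    · intro h; exact hodd (by simpa using evenFF_neg h)
    · intro y hy hne1 hne2
      rw [key v v, key2 y]
      exact hstrict (-y) (FF_neg hy) (fun h => hne1 (by rw [← neg_neg y, h]))
        (fun h => hne2 (by rw [← neg_neg y, h]))

lemma canon_aux (hp : 1 ≤ p) : ∀ (d : ℕ) (m e : ℤ), m ≠ 0 → |m| < 2 ^ p → emin ≤ e → e ≤ emax →
    (e - emin).toNat ≤ d →
    ∃ m' e' : ℤ, m' ≠ 0 ∧ |m'| < 2 ^ p ∧ emin ≤ e' ∧ e' ≤ emax ∧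
      (m':ℝ) * 2 ^ (e' + 1 - (p:ℤ)) = (m:ℝ) * 2 ^ (e + 1 - (p:ℤ)) ∧
      ((2:ℤ) ^ (p - 1) ≤ |m'| ∨ e' = emin) := by
  intro d
  induction d with
  | zero =>
    intro m e h1 h2 h3 h4 h5
    exact ⟨m, e, h1, h2, h3, h4, rfl, Or.inr (by omega)⟩
  | succ n ih =>
    intro m e h1 h2 h3 h4 h5
    by_cases hc : (2:ℤ) ^ (p - 1) ≤ |m|
    · exact ⟨m, e, h1, h2, h3, h4, rfl, Or.inl hc⟩
    by_cases he : e = emin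
    · exact ⟨m, e, h1, h2, h3, h4, rfl, Or.inr he⟩
    · have hP : (2:ℤ) ^ p = 2 * 2 ^ (p - 1) := by
        rw [← pow_succ']
        congr 1
        omega
      obtain ⟨m', e', g1, g2, g3, g4, g5, g6⟩ := ih (2 * m) (e - 1)
        (by omega)
        (by rw [abs_mul]; simp only [abs_two]; omega)
        (by omega) (by omega) (by omega)
      refine ⟨m', e', g1, g2, g3, g4, ?_, g6⟩
      rw [g5, show e + 1 - (p:ℤ) = ((e - 1) + 1 - (p:ℤ)) + 1 by ring, zadd]
      push_cast
      ring

lemma exists_canonical (hp : 1 ≤ p) {z : ℝ} (hz : z ∈ FF p emin emax) (h0 : z ≠ 0) :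
    ∃ m e : ℤ, m ≠ 0 ∧ |m| < 2 ^ p ∧ emin ≤ e ∧ e ≤ emax ∧
      z = (m:ℝ) * 2 ^ (e + 1 - (p:ℤ)) ∧ ((2:ℤ) ^ (p - 1) ≤ |m| ∨ e = emin) := by
  obtain ⟨m, e, h1, h2, h3, h4⟩ := hz
  have hm0 : m ≠ 0 := by
    rintro rfl
    simp at h4
    exact h0 h4
  obtain ⟨m', e', g1, g2, g3, g4, g5, g6⟩ :=
    canon_aux hp (e - emin).toNat m e hm0 h1 h2 h3 le_rfl
  exact ⟨m', e', g1, g2, g3, g4, by rw [h4, g5], g6⟩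

lemma not_even_pred (hp : 2 ≤ p) :
    ¬ evenFF p emin emax (((2 ^ (p-1) - 1 : ℤ) : ℝ) * 2 ^ (emin + 1 - (p:ℤ))) := by
  rintro ⟨m', e', h1, h2, h3, h4, h5, h6⟩
  have hP : (2:ℤ) ^ (p - 1) = 2 * 2 ^ (p - 2) := by
    rw [← pow_succ']
    congr 1
    omega
  rcases h6 with h6 | h6
  · -- |m'| ≥ 2^(p-1) : magnitude contradiction
    have hcast : |(m':ℝ)| = ((|m'| : ℤ) : ℝ) := by push_cast; ring
    have hb1 : ((2 ^ (p-1) - 1 : ℤ) : ℝ) * 2 ^ (emin + 1 - (p:ℤ)) =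
        |(m':ℝ)| * 2 ^ (e' + 1 - (p:ℤ)) := by
      rw [← abs_of_pos (show (0:ℝ) < ((2 ^ (p-1) - 1 : ℤ) : ℝ) * 2 ^ (emin + 1 - (p:ℤ)) from ?_),
        h4, abs_mul, abs_of_pos (two_zpow_pos _)]
      apply mul_pos _ (two_zpow_pos _)
      have : (1:ℤ) < 2 ^ (p-1) := by
        have := hP; nlinarith [pow_pos (show (0:ℤ) < 2 by norm_num) (p-2)]
      exact_mod_cast show (0:ℤ) < 2 ^ (p-1) - 1 by omega
    have hm'le : ((2 ^ (p-1) : ℤ) : ℝ) ≤ |(m':ℝ)| := by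
      rw [hcast]; exact_mod_cast h6
    have hzle : (2:ℝ) ^ (emin + 1 - (p:ℤ)) ≤ 2 ^ (e' + 1 - (p:ℤ)) :=
      zpow_le_zpow_right₀ one_le_two (by omega)
    have hbig : ((2 ^ (p-1) : ℤ) : ℝ) * 2 ^ (emin + 1 - (p:ℤ)) ≤
        |(m':ℝ)| * 2 ^ (e' + 1 - (p:ℤ)) := by
      apply mul_le_mul hm'le hzle (two_zpow_pos _).le (abs_nonneg _)
    rw [← hb1] at hbig
    have := scaled_lt (emin + 1 - (p:ℤ)) (show (2 ^ (p-1) - 1 : ℤ) < 2 ^ (p-1) by omega)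
    linarith
  · -- e' = emin: m' = 2^(p-1) - 1, odd
    rw [h6] at h4
    have : (m' : ℝ) = ((2 ^ (p-1) - 1 : ℤ) : ℝ) :=
      mul_right_cancel₀ (ne_of_gt (two_zpow_pos (emin + 1 - (p:ℤ)))) h4.symm
    have hm' : m' = 2 ^ (p-1) - 1 := by exact_mod_cast this
    omega

lemma x_eq (m e : ℤ) : ((m:ℝ) * 2 ^ (e + 1 - (p:ℤ))) * fmax p emax
    = ((m * (2 ^ p - 1) : ℤ) : ℝ) * 2 ^ (e + emax + 2 - 2*(p:ℤ)) := by
  rw [fmax_eq, show e + emax + 2 - 2*(p:ℤ) = (e + 1 - (p:ℤ)) + (emax + 1 - (p:ℤ)) by ring, zadd]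
  push_cast
  ring

lemma int_pow_mul (A : ℤ) (n : ℕ) (σ : ℤ) :
    ((A * 2 ^ n : ℤ) : ℝ) * 2 ^ σ = (A:ℝ) * 2 ^ ((n:ℤ) + σ) := by
  rw [zadd]; push_cast; rw [zpow_natCast]; ring

lemma pow_cast_mul (n : ℕ) (σ : ℤ) : ((2 ^ n : ℤ) : ℝ) * 2 ^ σ = 2 ^ ((n:ℤ) + σ) := by
  rw [zadd]; push_cast; rw [zpow_natCast]

lemma scaled_add (A B : ℤ) (σ : ℤ) : (A:ℝ)*2^σ + (B:ℝ)*2^σ = ((A+B : ℤ):ℝ)*2^σ := by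
  push_cast; ring

lemma zpow_le_one_imp {t : ℤ} (h : (2:ℝ) ^ t ≤ 1) : t ≤ 0 := by
  by_contra h'
  push_neg at h'
  have h2 : (2:ℝ) ^ (0:ℤ) < 2 ^ t := zpow_lt_zpow_right₀ one_lt_two (by omega)
  rw [zpow_zero] at h2
  linarith

lemma zpow_lt_one_imp {t : ℤ} (h : (2:ℝ) ^ t < 1) : t < 0 := by
  by_contra h'
  push_neg at h'
  have h2 : (2:ℝ) ^ (0:ℤ) ≤ 2 ^ t := zpow_le_zpow_right₀ one_le_two h'
  rw [zpow_zero] at h2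
  linarith

lemma case_A (hp : 2 ≤ p) (hemin : emin ≤ 0) (hemax : 0 ≤ emax)
    (m e : ℤ) (hm0 : 0 < m) (hm : m < 2 ^ p) (he1 : emin ≤ e) (he2 : e ≤ emax)
    (hz1 : (m:ℝ) * 2 ^ (e + 1 - (p:ℤ)) ≤ 1)
    (ha : (2:ℤ) ^ (p - 1) < m) :
    ∃ v : ℝ, RndSpec p emin emax (((m:ℝ) * 2 ^ (e + 1 - (p:ℤ))) * fmax p emax) v ∧
      RndSpec p emin emax (v / fmax p emax) ((m:ℝ) * 2 ^ (e + 1 - (p:ℤ))) := by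
  have hP : (2:ℤ) ^ p = 2 * 2 ^ (p - 1) := by
    rw [← pow_succ']; congr 1; omega
  set s : ℤ := e + emax + 2 - 2*(p:ℤ) with hs
  set c : ℤ := e + emax + 1 with hc
  -- e ≤ -1
  have he_neg : e ≤ -1 := by
    have h1 : (2:ℝ) ^ (e:ℤ) = ((2 ^ (p-1) : ℤ):ℝ) * 2 ^ (e + 1 - (p:ℤ)) := by
      rw [pow_cast_mul]; congr 1; omega
    have h2 : ((2 ^ (p-1) : ℤ):ℝ) * 2 ^ (e + 1 - (p:ℤ)) < (m:ℝ) * 2 ^ (e + 1 - (p:ℤ)) :=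
      scaled_lt _ ha
    have h3 : (2:ℝ) ^ (e:ℤ) < 1 := by rw [h1]; linarith
    have := zpow_lt_one_imp h3
    omega
  refine ⟨((m - 1 : ℤ):ℝ) * 2 ^ (c + 1 - (p:ℤ)), ?_, ?_⟩
  · -- first rounding
    have hx := x_eq (p := p) (emax := emax) m e
    have hv_s : ((m - 1 : ℤ):ℝ) * 2 ^ (c + 1 - (p:ℤ)) = (((m-1) * 2 ^ p : ℤ) : ℝ) * 2 ^ s := by
      rw [int_pow_mul]; congr 1; congr 1; omega
    have hxv : ((m:ℝ) * 2 ^ (e + 1 - (p:ℤ))) * fmax p emax - ((m - 1 : ℤ):ℝ) * 2 ^ (c + 1 - (p:ℤ))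
        = ((2 ^ p - m : ℤ):ℝ) * 2 ^ s := by
      rw [hx, hv_s, ← sub_mul]
      congr 1
      push_cast
      ring
    have habs : |((m:ℝ) * 2 ^ (e + 1 - (p:ℤ))) * fmax p emax - ((m - 1 : ℤ):ℝ) * 2 ^ (c + 1 - (p:ℤ))|
        = ((2 ^ p - m : ℤ):ℝ) * 2 ^ s := by
      rw [hxv, scaled_abs, abs_of_nonneg (show (0:ℤ) ≤ 2 ^ p - m by omega)]
    left
    constructor
    · exact FF_mem (m - 1) c (by rw [abs_of_nonneg (by omega)]; omega) (by omega) (by omega)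
    · apply strict_nearest
      · rw [habs, show (2:ℝ) ^ (c - (p:ℤ)) = ((2 ^ (p-1) : ℤ):ℝ) * 2 ^ s by
          rw [pow_cast_mul]; congr 1; omega]
        exact scaled_lt _ (by linarith)
      · right
        rw [habs, hx, show (2:ℝ) ^ c = ((2 ^ (2*p-1) : ℤ):ℝ) * 2 ^ s by
          rw [pow_cast_mul]; congr 1; omega, scaled_add]
        apply scaled_le
        have h2P : (2:ℤ) ^ (2*p-1) = 2 ^ p * 2 ^ (p-1) := by
          rw [← pow_add]; congr 1; omega
        nlinarith [pow_pos (show (0:ℤ) < 2 by norm_num) p,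
          mul_le_mul_of_nonneg_right (show (2:ℤ)^(p-1) + 1 ≤ m by omega)
            (pow_nonneg (show (0:ℤ) ≤ 2 by norm_num) p)]
  · -- second rounding
    have hx := x_eq (p := p) (emax := emax) m e
    have hv_s : ((m - 1 : ℤ):ℝ) * 2 ^ (c + 1 - (p:ℤ)) = (((m-1) * 2 ^ p : ℤ) : ℝ) * 2 ^ s := by
      rw [int_pow_mul]; congr 1; congr 1; omega
    have hfpos : (0:ℝ) < fmax p emax := fmax_pos (by omega)
    have hvzf : ((m - 1 : ℤ):ℝ) * 2 ^ (c + 1 - (p:ℤ)) - ((m:ℝ) * 2 ^ (e + 1 - (p:ℤ))) * fmax p emax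
        = ((2*(m - 2 ^ p) : ℤ):ℝ) * 2 ^ (s - 1) := by
      rw [hx, hv_s, ← sub_mul, show s = 1 + (s - 1) by ring, zadd]
      push_cast
      ring
    have habs2 : |((m - 1 : ℤ):ℝ) * 2 ^ (c + 1 - (p:ℤ)) - ((m:ℝ) * 2 ^ (e + 1 - (p:ℤ))) * fmax p emax|
        = ((2*(2 ^ p - m) : ℤ):ℝ) * 2 ^ (s - 1) := by
      rw [hvzf, scaled_abs]
      congr 2
      rw [abs_of_nonpos (by omega)]
      ring
    left
    constructor
    · exact FF_mem m e (by rw [abs_of_nonneg (by omega)]; omega) he1 he2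
    · apply strict_nearest
      · apply abs_sub_div_lt hfpos
        rw [habs2, fmax_eq, show (2:ℝ) ^ (e - (p:ℤ)) * (((2 ^ p - 1 : ℤ) : ℝ) * 2 ^ (emax + 1 - (p:ℤ)))
            = ((2 ^ p - 1 : ℤ):ℝ) * 2 ^ (s - 1) by
          rw [mul_comm ((2:ℝ) ^ (e - (p:ℤ))), mul_assoc, ← zadd]
          congr 2
          omega]
        exact scaled_lt _ (by linarith)
      · right
        apply div_ineq2 hfpos
        rw [habs2, hv_s, fmax_eq, show (2:ℝ) ^ (e:ℤ) * (((2 ^ p - 1 : ℤ) : ℝ) * 2 ^ (emax + 1 - (p:ℤ)))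
            = (((2 ^ p - 1) * 2^p : ℤ):ℝ) * 2 ^ (s - 1) by
          rw [mul_comm ((2:ℝ) ^ (e:ℤ)), mul_assoc, ← zadd, int_pow_mul]
          push_cast
          rw [show emax + 1 - (p:ℤ) + e = ((p:ℕ):ℤ) + (s-1) by omega],
          show (((m-1) * 2 ^ p : ℤ) : ℝ) * 2 ^ s = ((2*((m-1) * 2 ^ p) : ℤ):ℝ) * 2 ^ (s-1) by
          rw [show s = 1 + (s-1) by ring, zadd]; push_cast; ring,
          scaled_add]
        apply scaled_le
        nlinarith [mul_le_mul_of_nonneg_right (show (2:ℤ)^(p-1) + 1 ≤ m by omega)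
            (pow_nonneg (show (0:ℤ) ≤ 2 by norm_num) p),
          pow_pos (show (0:ℤ) < 2 by norm_num) (p-1),
          pow_pos (show (0:ℤ) < 2 by norm_num) p, hP]

lemma case_Blow (hp : 2 ≤ p) (hemin : emin ≤ 0) (hemax : 0 ≤ emax)
    (m : ℤ) (hm0 : 0 < m) (hm : m < 2 ^ p)
    (hlow : m * 2 ^ (emax.toNat + 2) < 2 ^ p) :
    ∃ v : ℝ, RndSpec p emin emax (((m:ℝ) * 2 ^ (emin + 1 - (p:ℤ))) * fmax p emax) v ∧
      RndSpec p emin emax (v / fmax p emax) ((m:ℝ) * 2 ^ (emin + 1 - (p:ℤ))) := by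
  have hee : emin ≤ emax := le_trans hemin hemax
  set E2 : ℕ := emax.toNat with hE2def
  have hE2 : (E2:ℤ) = emax := Int.toNat_of_nonneg hemax
  have hD : E2 + 2 ≤ p := by
    by_contra hcon
    push_neg at hcon
    have h1 : (2:ℤ) ^ p ≤ 2 ^ (E2 + 2) := pow_le_pow_right₀ one_le_two (by omega)
    nlinarith [pow_pos (show (0:ℤ) < 2 by norm_num) (E2+2)]
  set D : ℕ := p - (E2 + 2) with hDdef
  have hsplit : (2:ℤ) ^ p = 2 ^ D * 2 ^ (E2 + 2) := by
    rw [← pow_add]; congr 1; omega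
  have hP : (2:ℤ) ^ p = 2 * 2 ^ (p - 1) := by rw [← pow_succ']; congr 1; omega
  have hP2 : (2:ℤ) ^ (p-1) = 2 * 2 ^ (p - 2) := by rw [← pow_succ']; congr 1; omega
  set s : ℤ := emin + emax + 2 - 2*(p:ℤ) with hs
  have hfpos : (0:ℝ) < fmax p emax := fmax_pos (by omega)
  have hx : ((m:ℝ) * 2 ^ (emin + 1 - (p:ℤ))) * fmax p emax
      = ((m * (2 ^ p - 1) : ℤ) : ℝ) * 2 ^ s := x_eq (p := p) (emax := emax) m emin
  refine ⟨((m * 2 ^ (E2+1) : ℤ):ℝ) * 2 ^ (emin + 1 - (p:ℤ)), ?_, ?_⟩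
  · have hv_s : ((m * 2 ^ (E2+1) : ℤ):ℝ) * 2 ^ (emin + 1 - (p:ℤ)) = ((m * 2 ^ p : ℤ) : ℝ) * 2 ^ s := by
      rw [int_pow_mul, int_pow_mul, show ((E2+1:ℕ):ℤ) + (emin + 1 - (p:ℤ)) = ((p:ℕ):ℤ) + s by omega]
    have hxv : ((m:ℝ) * 2 ^ (emin + 1 - (p:ℤ))) * fmax p emax
        - ((m * 2 ^ (E2+1) : ℤ):ℝ) * 2 ^ (emin + 1 - (p:ℤ)) = ((-m : ℤ):ℝ) * 2 ^ s := by
      rw [hx, hv_s, ← sub_mul]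
      congr 1
      push_cast
      ring
    have habs : |((m:ℝ) * 2 ^ (emin + 1 - (p:ℤ))) * fmax p emax
        - ((m * 2 ^ (E2+1) : ℤ):ℝ) * 2 ^ (emin + 1 - (p:ℤ))| = ((m : ℤ):ℝ) * 2 ^ s := by
      rw [hxv, scaled_abs, abs_neg, abs_of_nonneg (by omega : (0:ℤ) ≤ m)]
    left
    constructor
    · apply FF_mem _ _ _ le_rfl hee
      rw [abs_of_nonneg (by positivity)]
      have h2 : (2:ℤ) ^ (E2+2) = 2 ^ (E2+1) * 2 := by rw [pow_succ]
      nlinarith [pow_pos (show (0:ℤ) < 2 by norm_num) (E2+1)]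
    · apply strict_nearest
      · rw [habs, show (2:ℝ) ^ (emin - (p:ℤ)) = ((2 ^ D : ℤ):ℝ) * 2 ^ s by
          rw [pow_cast_mul]; congr 1; omega]
        apply scaled_lt
        have := hsplit ▸ hlow
        exact lt_of_mul_lt_mul_right this (by positivity)
      · exact Or.inl rfl
  · have hv_s : ((m * 2 ^ (E2+1) : ℤ):ℝ) * 2 ^ (emin + 1 - (p:ℤ)) = ((m * 2 ^ p : ℤ) : ℝ) * 2 ^ s := by
      rw [int_pow_mul, int_pow_mul, show ((E2+1:ℕ):ℤ) + (emin + 1 - (p:ℤ)) = ((p:ℕ):ℤ) + s by omega]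
    have hvzf : ((m * 2 ^ (E2+1) : ℤ):ℝ) * 2 ^ (emin + 1 - (p:ℤ))
        - ((m:ℝ) * 2 ^ (emin + 1 - (p:ℤ))) * fmax p emax = ((2*m : ℤ):ℝ) * 2 ^ (s-1) := by
      rw [hx, hv_s, ← sub_mul, show s = 1 + (s-1) by ring, zadd]
      push_cast
      ring
    have habs2 : |((m * 2 ^ (E2+1) : ℤ):ℝ) * 2 ^ (emin + 1 - (p:ℤ))
        - ((m:ℝ) * 2 ^ (emin + 1 - (p:ℤ))) * fmax p emax| = ((2*m : ℤ):ℝ) * 2 ^ (s-1) := by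
      rw [hvzf, scaled_abs, abs_of_nonneg (by omega : (0:ℤ) ≤ 2*m)]
    left
    constructor
    · exact FF_mem m emin (by rw [abs_of_nonneg (by omega)]; omega) le_rfl hee
    · apply strict_nearest
      · apply abs_sub_div_lt hfpos
        rw [habs2, fmax_eq, show (2:ℝ) ^ (emin - (p:ℤ)) * (((2 ^ p - 1 : ℤ) : ℝ) * 2 ^ (emax + 1 - (p:ℤ)))
            = ((2 ^ p - 1 : ℤ):ℝ) * 2 ^ (s - 1) by
          rw [mul_comm ((2:ℝ) ^ (emin - (p:ℤ))), mul_assoc, ← zadd,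
            show emax + 1 - (p:ℤ) + (emin - (p:ℤ)) = s - 1 by omega]]
        apply scaled_lt
        have h4 : 4 * m ≤ m * 2 ^ (E2+2) := by
          have h5 : (2:ℤ)^2 ≤ 2 ^ (E2+2) := pow_le_pow_right₀ one_le_two (by omega)
          nlinarith
        have h6 : (2:ℤ) ≤ 2 ^ (p-1) := by
          calc (2:ℤ) = 2^1 := by norm_num
          _ ≤ 2 ^ (p-1) := pow_le_pow_right₀ one_le_two (by omega)
        linarith
      · exact Or.inl rfl

lemma case_tie (hp : 2 ≤ p) (hemin : emin ≤ 0) (hemax : 0 ≤ emax)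
    (m : ℤ) (hm0 : 0 < m) (hm : m < 2 ^ p)
    (heq : m * 2 ^ (emax.toNat + 2) = 2 ^ p) :
    ∃ v : ℝ, RndSpec p emin emax (((m:ℝ) * 2 ^ (emin + 1 - (p:ℤ))) * fmax p emax) v ∧
      RndSpec p emin emax (v / fmax p emax) ((m:ℝ) * 2 ^ (emin + 1 - (p:ℤ))) := by
  have hee : emin ≤ emax := le_trans hemin hemax
  set E2 : ℕ := emax.toNat with hE2def
  have hE2 : (E2:ℤ) = emax := Int.toNat_of_nonneg hemax
  have hD : E2 + 2 ≤ p := by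
    by_contra hcon
    push_neg at hcon
    have h1 : (2:ℤ) ^ p < 2 ^ (E2 + 2) := pow_lt_pow_right₀ one_lt_two (by omega)
    nlinarith [pow_pos (show (0:ℤ) < 2 by norm_num) (E2+2)]
  set D : ℕ := p - (E2 + 2) with hDdef
  have hsplit : (2:ℤ) ^ p = 2 ^ D * 2 ^ (E2 + 2) := by
    rw [← pow_add]; congr 1; omega
  have hmK : m = 2 ^ D := by
    have h2 : m * 2 ^ (E2+2) = 2 ^ D * 2 ^ (E2 + 2) := by rw [← hsplit, heq]
    exact mul_right_cancel₀ (by positivity) h2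
  have hP : (2:ℤ) ^ p = 2 * 2 ^ (p - 1) := by rw [← pow_succ']; congr 1; omega
  have hP2 : (2:ℤ) ^ (p-1) = 2 * 2 ^ (p - 2) := by rw [← pow_succ']; congr 1; omega
  have h2pm1 : (2:ℤ) ≤ 2 ^ (p-1) := by
    calc (2:ℤ) = 2^1 := by norm_num
    _ ≤ 2 ^ (p-1) := pow_le_pow_right₀ one_le_two (by omega)
  set s : ℤ := emin + emax + 2 - 2*(p:ℤ) with hs
  have hfpos : (0:ℝ) < fmax p emax := fmax_pos (by omega)
  have hx : ((m:ℝ) * 2 ^ (emin + 1 - (p:ℤ))) * fmax p emax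
      = ((m * (2 ^ p - 1) : ℤ) : ℝ) * 2 ^ s := x_eq (p := p) (emax := emax) m emin
  have hhalf : (2:ℝ) ^ (emin + 1 - (p:ℤ)) = 2 * 2 ^ (emin - (p:ℤ)) := by
    rw [show emin + 1 - (p:ℤ) = 1 + (emin - (p:ℤ)) by ring, zadd]; norm_num
  have hx_tie : ((m:ℝ) * 2 ^ (emin + 1 - (p:ℤ))) * fmax p emax
      = ((2^(p-1) : ℤ):ℝ) * 2 ^ (emin + 1 - (p:ℤ)) - 2 ^ (emin - (p:ℤ)) := by
    rw [hx, show (m * (2 ^ p - 1) : ℤ) = 2^(D+p) - 2^D by rw [hmK, pow_add]; ring,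
      show ((2^(D+p) - 2^D : ℤ):ℝ) = ((2^(D+p) : ℤ):ℝ) - ((2^D : ℤ):ℝ) by push_cast; ring,
      sub_mul, pow_cast_mul, pow_cast_mul, pow_cast_mul,
      show ((D+p:ℕ):ℤ) + s = ((p-1:ℕ):ℤ) + (emin + 1 - (p:ℤ)) by omega,
      show ((D:ℕ):ℤ) + s = emin - (p:ℤ) by omega]
  have hvx : ((m:ℝ) * 2 ^ (emin + 1 - (p:ℤ))) * fmax p emax
      - ((2^(p-1) : ℤ):ℝ) * 2 ^ (emin + 1 - (p:ℤ)) = -(2 ^ (emin - (p:ℤ))) := by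
    rw [hx_tie]; ring
  have habs_v : |((m:ℝ) * 2 ^ (emin + 1 - (p:ℤ))) * fmax p emax
      - ((2^(p-1) : ℤ):ℝ) * 2 ^ (emin + 1 - (p:ℤ))| = 2 ^ (emin - (p:ℤ)) := by
    rw [hvx, abs_neg, abs_of_pos (two_zpow_pos _)]
  have hva : ((2^(p-1) : ℤ):ℝ) * 2 ^ (emin + 1 - (p:ℤ))
      - ((2^(p-1) - 1 : ℤ):ℝ) * 2 ^ (emin + 1 - (p:ℤ)) = 2 ^ (emin + 1 - (p:ℤ)) := by
    rw [← sub_mul]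
    push_cast
    ring
  have hxa : ((m:ℝ) * 2 ^ (emin + 1 - (p:ℤ))) * fmax p emax
      - ((2^(p-1) - 1 : ℤ):ℝ) * 2 ^ (emin + 1 - (p:ℤ)) = 2 ^ (emin - (p:ℤ)) := by
    rw [hx_tie]
    rw [show ((2^(p-1) : ℤ):ℝ) * 2 ^ (emin + 1 - (p:ℤ)) - 2 ^ (emin - (p:ℤ))
        - ((2^(p-1) - 1 : ℤ):ℝ) * 2 ^ (emin + 1 - (p:ℤ))
        = (((2^(p-1) : ℤ):ℝ) * 2 ^ (emin + 1 - (p:ℤ))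
          - ((2^(p-1) - 1 : ℤ):ℝ) * 2 ^ (emin + 1 - (p:ℤ))) - 2 ^ (emin - (p:ℤ)) by ring,
      hva, hhalf]
    ring
  have habs_a : |((m:ℝ) * 2 ^ (emin + 1 - (p:ℤ))) * fmax p emax
      - ((2^(p-1) - 1 : ℤ):ℝ) * 2 ^ (emin + 1 - (p:ℤ))| = 2 ^ (emin - (p:ℤ)) := by
    rw [hxa, abs_of_pos (two_zpow_pos _)]
  refine ⟨((2^(p-1) : ℤ):ℝ) * 2 ^ (emin + 1 - (p:ℤ)), ?_, ?_⟩
  · right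
    refine ⟨((2^(p-1) - 1 : ℤ):ℝ) * 2 ^ (emin + 1 - (p:ℤ)),
      FF_mem _ _ (by rw [abs_of_nonneg (show (0:ℤ) ≤ 2^(p-1) - 1 by linarith)]; linarith) le_rfl hee,
      FF_mem _ _ (by rw [abs_of_nonneg (by positivity)]; linarith) le_rfl hee,
      ?_, by rw [habs_v, habs_a], not_even_pred hp, ?_, ?_⟩
    · intro h
      have h2 := mul_right_cancel₀ (ne_of_gt (two_zpow_pos (emin + 1 - (p:ℤ)))) h
      have h3 : (2^(p-1) - 1 : ℤ) = 2^(p-1) := by exact_mod_cast h2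
      omega
    · exact ⟨2^(p-1), emin, by rw [abs_of_nonneg (by positivity)]; linarith, le_rfl, hee, rfl,
        ⟨2^(p-2), hP2⟩, Or.inl (by rw [abs_of_nonneg (by positivity)])⟩
    · exact tie_nearest (2^(p-1)) _ hx_tie
  · left
    have hf1 : 1 < fmax p emax := by
      rw [fmax_eq]
      rw [show (1:ℝ) = ((2^(D+1) : ℤ):ℝ) * 2 ^ (emax + 1 - (p:ℤ)) by
        rw [pow_cast_mul, show ((D+1:ℕ):ℤ) + (emax + 1 - (p:ℤ)) = 0 by omega, zpow_zero]]
      apply scaled_lt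
      have h4 : (2:ℤ)^(D+1) ≤ 2^(p-1) := pow_le_pow_right₀ one_le_two (by omega)
      linarith
    refine ⟨FF_mem m emin (by rw [abs_of_nonneg (by omega)]; omega) le_rfl hee, ?_⟩
    apply strict_nearest
    · apply abs_sub_div_lt hfpos
      have hvzf : ((2^(p-1) : ℤ):ℝ) * 2 ^ (emin + 1 - (p:ℤ))
          - ((m:ℝ) * 2 ^ (emin + 1 - (p:ℤ))) * fmax p emax = 2 ^ (emin - (p:ℤ)) := by
        rw [hx_tie]; ring
      rw [hvzf, abs_of_pos (two_zpow_pos _)]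
      calc (2:ℝ) ^ (emin - (p:ℤ)) = 2 ^ (emin - (p:ℤ)) * 1 := by ring
        _ < 2 ^ (emin - (p:ℤ)) * fmax p emax := by
            exact mul_lt_mul_of_pos_left hf1 (two_zpow_pos _)
    · exact Or.inl rfl

lemma case_B1high (hp : 2 ≤ p) (hemin : emin ≤ 0) (hemax : 0 ≤ emax)
    (m e : ℤ) (hm0 : 0 < m) (hm : m < 2 ^ p) (he1 : emin ≤ e) (he2 : e ≤ emax)
    (hz1 : (m:ℝ) * 2 ^ (e + 1 - (p:ℤ)) ≤ 1)
    (k : ℕ) (hmK : m = 2 ^ k) (hkE : (p:ℤ) ≤ (k:ℤ) + emax + 1) :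
    ∃ v : ℝ, RndSpec p emin emax (((m:ℝ) * 2 ^ (e + 1 - (p:ℤ))) * fmax p emax) v ∧
      RndSpec p emin emax (v / fmax p emax) ((m:ℝ) * 2 ^ (e + 1 - (p:ℤ))) := by
  have hP : (2:ℤ) ^ p = 2 * 2 ^ (p - 1) := by rw [← pow_succ']; congr 1; omega
  set s : ℤ := e + emax + 2 - 2*(p:ℤ) with hs
  set c : ℤ := e + emax + (k:ℤ) + 1 - (p:ℤ) with hc
  have hfpos : (0:ℝ) < fmax p emax := fmax_pos (by omega)
  have hx : ((m:ℝ) * 2 ^ (e + 1 - (p:ℤ))) * fmax p emax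
      = ((m * (2 ^ p - 1) : ℤ) : ℝ) * 2 ^ s := x_eq (p := p) (emax := emax) m e
  have hcge : emin ≤ c := by omega
  have hcle : c ≤ emax := by
    have hz1' : (2:ℝ) ^ ((k:ℤ) + (e + 1 - (p:ℤ))) ≤ 1 := by
      rw [← pow_cast_mul, ← hmK]; exact hz1
    have := zpow_le_one_imp hz1'
    omega
  have hveq : ((2^p - 1 : ℤ):ℝ) * 2 ^ (c + 1 - (p:ℤ)) = ((m * (2 ^ p - 1) : ℤ) : ℝ) * 2 ^ s := by
    rw [show (m * (2^p - 1) : ℤ) = (2^p - 1) * 2^k by rw [hmK]; ring, int_pow_mul,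
      show ((k:ℕ):ℤ) + s = c + 1 - (p:ℤ) by omega]
  have hpos2 : (0:ℤ) ≤ 2^p - 1 := by
    have h1 : (0:ℤ) < 2^p := pow_pos (by norm_num) p
    omega
  refine ⟨((2^p - 1 : ℤ):ℝ) * 2 ^ (c + 1 - (p:ℤ)), ?_, ?_⟩
  · left
    refine ⟨FF_mem _ _ (by rw [abs_of_nonneg hpos2]; omega) hcge hcle, ?_⟩
    intro y hy hne
    have hvx : ((2^p - 1 : ℤ):ℝ) * 2 ^ (c + 1 - (p:ℤ))
        = ((m:ℝ) * 2 ^ (e + 1 - (p:ℤ))) * fmax p emax := by rw [hveq, ← hx]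
    rw [← hvx, sub_self, abs_zero]
    exact abs_pos.mpr (sub_ne_zero.mpr (fun hh => hne hh.symm))
  · have hdiv : ((2^p - 1 : ℤ):ℝ) * 2 ^ (c + 1 - (p:ℤ)) / fmax p emax
        = (m:ℝ) * 2 ^ (e + 1 - (p:ℤ)) := by
      rw [div_eq_iff (ne_of_gt hfpos), hveq, ← hx]
    rw [hdiv]
    left
    refine ⟨FF_mem m e (by rw [abs_of_nonneg (by omega)]; omega) he1 he2, ?_⟩
    intro y hy hne
    rw [sub_self, abs_zero]
    exact abs_pos.mpr (sub_ne_zero.mpr (fun hh => hne hh.symm))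

lemma case_Bhigh (hp : 2 ≤ p) (hemin : emin ≤ 0) (hemax : 0 ≤ emax)
    (m : ℤ) (hm0 : 0 < m) (hm : m < 2 ^ p) (hmlt : m < 2 ^ (p-1))
    (k : ℕ) (hk1 : (2:ℤ)^k < m) (hk2 : m < 2^(k+1))
    (hhigh : p ≤ k + emax.toNat + 2) :
    ∃ v : ℝ, RndSpec p emin emax (((m:ℝ) * 2 ^ (emin + 1 - (p:ℤ))) * fmax p emax) v ∧
      RndSpec p emin emax (v / fmax p emax) ((m:ℝ) * 2 ^ (emin + 1 - (p:ℤ))) := by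
  have hee : emin ≤ emax := le_trans hemin hemax
  have hE2 : ((emax.toNat : ℕ):ℤ) = emax := Int.toNat_of_nonneg hemax
  have hP : (2:ℤ) ^ p = 2 * 2 ^ (p - 1) := by rw [← pow_succ']; congr 1; omega
  have hik : (2:ℤ) ^ (k+1) = 2 * 2 ^ k := by rw [← pow_succ']
  have hkp2 : k + 2 ≤ p := by
    have h1 : (2:ℤ)^k < 2^(p-1) := lt_trans hk1 hmlt
    have h2 : k < p - 1 := by
      by_contra hcon
      push_neg at hcon
      have := pow_le_pow_right₀ (show (1:ℤ) ≤ 2 by norm_num) hcon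
      omega
    omega
  set D2 : ℕ := p - (k+1) with hD2def
  have hsplit2 : (2:ℤ) ^ p = 2 ^ D2 * 2 ^ (k+1) := by
    rw [← pow_add]; congr 1; omega
  set s : ℤ := emin + emax + 2 - 2*(p:ℤ) with hs
  set c : ℤ := emin + emax + (k:ℤ) + 2 - (p:ℤ) with hc
  have hfpos : (0:ℝ) < fmax p emax := fmax_pos (by omega)
  have hx : ((m:ℝ) * 2 ^ (emin + 1 - (p:ℤ))) * fmax p emax
      = ((m * (2 ^ p - 1) : ℤ) : ℝ) * 2 ^ s := x_eq (p := p) (emax := emax) m emin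
  have hv_s : ((m * 2^D2 - 1 : ℤ):ℝ) * 2 ^ (c + 1 - (p:ℤ))
      = ((m * 2^p - 2^(k+1) : ℤ) : ℝ) * 2 ^ s := by
    rw [show (m * 2^p - 2^(k+1) : ℤ) = (m * 2^D2 - 1) * 2^(k+1) by rw [hsplit2]; ring,
      int_pow_mul, show ((k+1:ℕ):ℤ) + s = c + 1 - (p:ℤ) by omega]
  have hxv : ((m:ℝ) * 2 ^ (emin + 1 - (p:ℤ))) * fmax p emax
      - ((m * 2^D2 - 1 : ℤ):ℝ) * 2 ^ (c + 1 - (p:ℤ)) = ((2^(k+1) - m : ℤ):ℝ) * 2 ^ s := by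
    rw [hx, hv_s, ← sub_mul]
    congr 1
    push_cast
    ring
  have habs : |((m:ℝ) * 2 ^ (emin + 1 - (p:ℤ))) * fmax p emax
      - ((m * 2^D2 - 1 : ℤ):ℝ) * 2 ^ (c + 1 - (p:ℤ))| = ((2^(k+1) - m : ℤ):ℝ) * 2 ^ s := by
    rw [hxv, scaled_abs, abs_of_nonneg (show (0:ℤ) ≤ 2^(k+1) - m by linarith)]
  have hVpos : (0:ℤ) ≤ m * 2^D2 - 1 := by
    nlinarith [pow_pos (show (0:ℤ) < 2 by norm_num) D2]
  have hVlt : m * 2^D2 - 1 < 2^p := by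
    nlinarith [mul_le_mul_of_nonneg_right (show m ≤ 2^(k+1) - 1 by linarith)
      (pow_nonneg (show (0:ℤ) ≤ 2 by norm_num) D2),
      pow_pos (show (0:ℤ) < 2 by norm_num) D2, hsplit2]
  refine ⟨((m * 2^D2 - 1 : ℤ):ℝ) * 2 ^ (c + 1 - (p:ℤ)), ?_, ?_⟩
  · left
    refine ⟨FF_mem _ _ (by rw [abs_of_nonneg hVpos]; exact hVlt) (by omega) (by omega), ?_⟩
    apply strict_nearest
    · rw [habs, show (2:ℝ) ^ (c - (p:ℤ)) = ((2 ^ k : ℤ):ℝ) * 2 ^ s by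
        rw [pow_cast_mul]; congr 1; omega]
      apply scaled_lt
      linarith
    · right
      rw [habs, hx, show (2:ℝ) ^ c = ((2 ^ (p+k) : ℤ):ℝ) * 2 ^ s by
        rw [pow_cast_mul]; congr 1; omega, scaled_add]
      apply scaled_le
      have hpk : (2:ℤ)^(p+k) = 2^p * 2^k := pow_add 2 p k
      have hle : (2:ℤ)^(k+1) ≤ 2^p := pow_le_pow_right₀ one_le_two (by omega)
      nlinarith [mul_le_mul_of_nonneg_right (show (2:ℤ)^k + 1 ≤ m by omega)
        (pow_nonneg (show (0:ℤ) ≤ 2 by norm_num) p)]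
  · left
    refine ⟨FF_mem m emin (by rw [abs_of_nonneg (by omega)]; omega) le_rfl hee, ?_⟩
    apply strict_nearest
    · apply abs_sub_div_lt hfpos
      have hvzf : ((m * 2^D2 - 1 : ℤ):ℝ) * 2 ^ (c + 1 - (p:ℤ))
          - ((m:ℝ) * 2 ^ (emin + 1 - (p:ℤ))) * fmax p emax
          = ((2*(m - 2^(k+1)) : ℤ):ℝ) * 2 ^ (s-1) := by
        rw [hx, hv_s, ← sub_mul, show s = 1 + (s-1) by ring, zadd]
        push_cast
        ring
      have habs2 : |((m * 2^D2 - 1 : ℤ):ℝ) * 2 ^ (c + 1 - (p:ℤ))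
          - ((m:ℝ) * 2 ^ (emin + 1 - (p:ℤ))) * fmax p emax|
          = ((2*(2^(k+1) - m) : ℤ):ℝ) * 2 ^ (s-1) := by
        rw [hvzf, scaled_abs]
        congr 2
        rw [abs_of_nonpos (by linarith)]
        ring
      rw [habs2, fmax_eq, show (2:ℝ) ^ (emin - (p:ℤ)) * (((2 ^ p - 1 : ℤ) : ℝ) * 2 ^ (emax + 1 - (p:ℤ)))
          = ((2 ^ p - 1 : ℤ):ℝ) * 2 ^ (s - 1) by
        rw [mul_comm ((2:ℝ) ^ (emin - (p:ℤ))), mul_assoc, ← zadd,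
          show emax + 1 - (p:ℤ) + (emin - (p:ℤ)) = s - 1 by omega]]
      apply scaled_lt
      have hle : (2:ℤ)^(k+1) ≤ 2^p := pow_le_pow_right₀ one_le_two (by omega)
      linarith
    · exact Or.inl rfl

lemma core_pos (hp : 2 ≤ p) (hemin : emin ≤ 0) (hemax : 0 ≤ emax)
    (m e : ℤ) (hm0 : 0 < m) (hm : m < 2 ^ p) (he1 : emin ≤ e) (he2 : e ≤ emax)
    (hcan : (2:ℤ) ^ (p - 1) ≤ m ∨ e = emin)
    (hz1 : (m:ℝ) * 2 ^ (e + 1 - (p:ℤ)) ≤ 1) :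
    ∃ v : ℝ, RndSpec p emin emax (((m:ℝ) * 2 ^ (e + 1 - (p:ℤ))) * fmax p emax) v ∧
      RndSpec p emin emax (v / fmax p emax) ((m:ℝ) * 2 ^ (e + 1 - (p:ℤ))) := by
  rcases lt_or_ge ((2:ℤ)^(p-1)) m with ha | hb
  · exact case_A hp hemin hemax m e hm0 hm he1 he2 hz1 ha
  · have h4 : (4:ℤ) ≤ 2 ^ (emax.toNat + 2) := by
      calc (4:ℤ) = 2^2 := by norm_num
      _ ≤ _ := pow_le_pow_right₀ one_le_two (by omega)
    have hP : (2:ℤ) ^ p = 2 * 2 ^ (p - 1) := by rw [← pow_succ']; congr 1; omega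
    have hppos : (0:ℤ) < 2^(p-1) := pow_pos (by norm_num) _
    rcases lt_trichotomy (m * 2 ^ (emax.toNat + 2)) (2 ^ p) with hlow | heq | hhigh
    · have he : e = emin := by
        rcases hcan with hc | hc
        · exfalso
          have hme : m = 2^(p-1) := le_antisymm hb hc
          rw [hme] at hlow
          nlinarith
        · exact hc
      subst he
      exact case_Blow hp hemin hemax m hm0 hm hlow
    · have he : e = emin := by
        rcases hcan with hc | hc
        · exfalso
          have hme : m = 2^(p-1) := le_antisymm hb hc
          rw [hme] at heq
          nlinarith
        · exact hc
      subst he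
      exact case_tie hp hemin hemax m hm0 hm heq
    · set k : ℕ := m.toNat.log2 with hk
      have hmt : (m.toNat : ℤ) = m := Int.toNat_of_nonneg (by omega)
      have hk1 : (2:ℤ)^k ≤ m := by
        have h5 := Nat.log2_self_le (show m.toNat ≠ 0 by omega)
        calc ((2:ℤ))^k = ((2^k : ℕ) : ℤ) := by push_cast; ring
        _ ≤ (m.toNat : ℤ) := by exact_mod_cast h5
        _ = m := hmt
      have hk2 : m < 2^(k+1) := by
        have h5 := Nat.lt_log2_self (n := m.toNat)
        calc m = (m.toNat : ℤ) := hmt.symm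
        _ < ((2^(k+1) : ℕ) : ℤ) := by exact_mod_cast h5
        _ = 2^(k+1) := by push_cast; ring
      have hE2 : ((emax.toNat : ℕ):ℤ) = emax := Int.toNat_of_nonneg hemax
      by_cases hpow : m = 2^k
      · apply case_B1high hp hemin hemax m e hm0 hm he1 he2 hz1 k hpow
        have h5 : (2:ℤ)^p < 2^(k + (emax.toNat + 2)) := by
          calc (2:ℤ)^p < m * 2^(emax.toNat + 2) := hhigh
          _ = 2^(k + (emax.toNat+2)) := by rw [hpow, ← pow_add]
        have h6 : p < k + (emax.toNat + 2) := by
          by_contra hcon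
          push_neg at hcon
          have := pow_le_pow_right₀ (show (1:ℤ) ≤ 2 by norm_num) hcon
          omega
        omega
      · have hk1' : (2:ℤ)^k < m := lt_of_le_of_ne hk1 (fun h => hpow h.symm)
        have hmlt : m < 2^(p-1) := by
          rcases lt_or_eq_of_le hb with h | h
          · exact h
          · exfalso
            have hkp : k < p - 1 := by
              by_contra hcon
              push_neg at hcon
              have := pow_le_pow_right₀ (show (1:ℤ) ≤ 2 by norm_num) hcon
              omega
            have := pow_le_pow_right₀ (show (1:ℤ) ≤ 2 by norm_num) (show k + 1 ≤ p - 1 by omega)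
            omega
        have he : e = emin := by
          rcases hcan with hc | hc
          · exfalso; omega
          · exact hc
        subst he
        have hhigh' : p ≤ k + emax.toNat + 2 := by
          have h5 : (2:ℤ)^p < 2^(k + 1 + (emax.toNat + 2)) := by
            calc (2:ℤ)^p < m * 2^(emax.toNat + 2) := hhigh
            _ ≤ 2^(k+1) * 2^(emax.toNat+2) := by
                nlinarith [pow_pos (show (0:ℤ) < 2 by norm_num) (emax.toNat+2)]
            _ = 2^(k + 1 + (emax.toNat + 2)) := (pow_add 2 (k+1) (emax.toNat+2)).symm
          have h6 : p < k + 1 + (emax.toNat + 2) := by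
            by_contra hcon
            push_neg at hcon
            have := pow_le_pow_right₀ (show (1:ℤ) ≤ 2 by norm_num) hcon
            omega
          omega
        exact case_Bhigh hp hemin hemax m hm0 hm hmlt k hk1' hk2 hhigh'

end MDF

/-- For every float `z` with `|z| ≤ 1`, `(z ⊗ f_max) ⊘ f_max = z`. -/
theorem mul_div_fmax (p : ℕ) (hp : 2 ≤ p) (emin emax : ℤ)
    (hemin : emin ≤ 0) (hemax : 0 ≤ emax)
    (rnd : ℝ → ℝ)
    (hrnd : IsRNE (FF p emin emax) (evenFF p emin emax) rnd) :
    ∀ z ∈ FF p emin emax, |z| ≤ 1 →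
      rnd (rnd (z * fmax p emax) / fmax p emax) = z := by


  intro z hz hz1abs
  have hee : emin ≤ emax := le_trans hemin hemax
  rcases eq_or_ne z 0 with rfl | h0
  · have hmem0 : (0:ℝ) ∈ FF p emin emax :=
      ⟨0, emin, by simpa using pow_pos (show (0:ℤ) < 2 by norm_num) p, le_rfl, hee, by simp⟩
    have hspec : MDF.RndSpec p emin emax 0 0 := Or.inl ⟨hmem0, fun y hy hne => by
      rw [sub_self, abs_zero, zero_sub, abs_neg]
      exact abs_pos.mpr hne⟩
    rw [zero_mul, MDF.rnd_of_spec hrnd hspec, zero_div, MDF.rnd_of_spec hrnd hspec]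
  · obtain ⟨m, e, hm0, hmabs, he1, he2, hzeq, hcan⟩ := MDF.exists_canonical (by omega) hz h0
    rcases lt_trichotomy m 0 with hneg | hzero | hpos
    · -- negative
      have hm' : -m < 2^p := by
        have := abs_lt.mp hmabs
        omega
      have hcan' : (2:ℤ)^(p-1) ≤ -m ∨ e = emin := by
        rcases hcan with hc | hc
        · left; rw [abs_of_neg hneg] at hc; exact hc
        · right; exact hc
      have hzneg : z < 0 := by
        rw [hzeq]
        apply mul_neg_of_neg_of_pos _ (MDF.two_zpow_pos _)
        exact_mod_cast hneg
      have hz1' : (((-m : ℤ):ℝ)) * 2 ^ (e + 1 - (p:ℤ)) ≤ 1 := by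
        have h1 : ((-m : ℤ):ℝ) * 2 ^ (e + 1 - (p:ℤ)) = -z := by rw [hzeq]; push_cast; ring
        rw [h1]
        rw [abs_of_neg hzneg] at hz1abs
        exact hz1abs
      obtain ⟨v, h1, h2⟩ := MDF.core_pos hp hemin hemax (-m) e (by omega) hm' he1 he2 hcan' hz1'
      have e1 : -(((-m : ℤ):ℝ) * 2 ^ (e + 1 - (p:ℤ)) * fmax p emax) = z * fmax p emax := by
        rw [hzeq]; push_cast; ring
      have e2 : -(((-m : ℤ):ℝ) * 2 ^ (e + 1 - (p:ℤ))) = z := by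
        rw [hzeq]; push_cast; ring
      have h1' := MDF.RndSpec.neg h1
      rw [e1] at h1'
      have h2' := MDF.RndSpec.neg h2
      rw [e2, show -(v / fmax p emax) = (-v) / fmax p emax by ring] at h2'
      rw [MDF.rnd_of_spec hrnd h1', MDF.rnd_of_spec hrnd h2']
    · exact absurd hzero hm0
    · have hm' : m < 2^p := by
        have := abs_lt.mp hmabs
        omega
      have hcan' : (2:ℤ)^(p-1) ≤ m ∨ e = emin := by
        rcases hcan with hc | hc
        · left; rw [abs_of_pos hpos] at hc; exact hc
        · right; exact hc
      have hz1' : ((m : ℤ):ℝ) * 2 ^ (e + 1 - (p:ℤ)) ≤ 1 := by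
        rw [← hzeq]
        exact (le_abs_self z).trans hz1abs
      obtain ⟨v, h1, h2⟩ := MDF.core_pos hp hemin hemax m e hpos hm' he1 he2 hcan' hz1'
      rw [hzeq, MDF.rnd_of_spec hrnd h1, MDF.rnd_of_spec hrnd h2]
end

section
/- In IEEE 754 binary arithmetic with round-to-nearest ties-to-even, |z| ⊗ f_max ≤ f_max if and only if |z| ≤ 1. In particular, for z = 1 + 2^{1−p} (the successor of 1), z ⊗ f_max = +∞. -/
open scoped Classical

/-- Round-to-nearest ties-to-even with overflow to `±∞`, modelled in `EReal`:
values of magnitude at least `f_max + 2^(emax-p)` round to the infinity of the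
corresponding sign; other values round to the nearest finite float
(ties-to-even). -/
def IsRNEx (p : ℕ) (emin emax : ℤ) (rnd : ℝ → EReal) : Prop :=
  ∀ x : ℝ,
    (fmax p emax + (2 : ℝ) ^ (emax - (p : ℤ)) ≤ x → rnd x = ⊤) ∧
    (x ≤ -(fmax p emax + (2 : ℝ) ^ (emax - (p : ℤ))) → rnd x = ⊥) ∧
    (|x| < fmax p emax + (2 : ℝ) ^ (emax - (p : ℤ)) →
      ∃ z ∈ FF p emin emax, rnd x = (z : EReal) ∧
        (∀ y ∈ FF p emin emax, |x - z| ≤ |x - y|) ∧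
        (∀ y ∈ FF p emin emax, y ≠ z → |x - z| = |x - y| → evenFF p emin emax z))

lemma FF_abs_le (p : ℕ) (hp : 1 ≤ p) (emin emax : ℤ) (y : ℝ)
    (hy : y ∈ FF p emin emax) : |y| ≤ fmax p emax := by
  obtain ⟨m, e, hm, _, he, rfl⟩ := hy
  have h2 : (0:ℝ) < (2:ℝ) ^ (e + 1 - (p:ℤ)) := zpow_pos two_pos _
  have habs : |(m:ℝ) * (2:ℝ) ^ (e + 1 - (p:ℤ))| = |(m:ℝ)| * (2:ℝ) ^ (e + 1 - (p:ℤ)) := by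
    rw [abs_mul, abs_of_pos h2]
  rw [habs]
  have hm' : |(m:ℝ)| ≤ (2:ℝ)^p - 1 := by
    have : |m| ≤ 2 ^ p - 1 := by omega
    calc |(m:ℝ)| = ((|m| : ℤ) : ℝ) := by rw [Int.cast_abs]
    _ ≤ ((2^p - 1 : ℤ) : ℝ) := by exact_mod_cast this
    _ = (2:ℝ)^p - 1 := by push_cast; ring
  have hee : (2:ℝ) ^ (e + 1 - (p:ℤ)) ≤ (2:ℝ) ^ (emax + 1 - (p:ℤ)) :=
    zpow_le_zpow_right₀ one_le_two (by omega)
  have key : ((2:ℝ)^p - 1) * (2:ℝ) ^ (emax + 1 - (p:ℤ)) = fmax p emax := by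
    have e1 : (2:ℝ)^(emax+1-(p:ℤ)) = 2^(1-(p:ℤ)) * 2^emax := by
      rw [← zpow_add₀ (two_ne_zero (α := ℝ))]; congr 1; ring
    have e2 : (2:ℝ)^p * 2^(1-(p:ℤ)) = 2 := by
      rw [← zpow_natCast (2:ℝ) p, ← zpow_add₀ (two_ne_zero (α := ℝ)),
        show (p:ℤ) + (1-(p:ℤ)) = 1 by ring, zpow_one]
    rw [fmax, e1]
    linear_combination (2:ℝ)^emax * e2
  calc |(m:ℝ)| * (2:ℝ) ^ (e + 1 - (p:ℤ))
      ≤ ((2:ℝ)^p - 1) * (2:ℝ) ^ (emax + 1 - (p:ℤ)) := by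
        have h2p : (1:ℝ) ≤ 2^p := one_le_pow₀ one_le_two
        apply mul_le_mul hm' hee (le_of_lt h2) (by linarith)
    _ = fmax p emax := key

lemma FF_gap (p : ℕ) (hp : 2 ≤ p) (emin emax : ℤ) (z : ℝ)
    (hz : z ∈ FF p emin emax) (h1 : 1 < |z|) : 1 + (2:ℝ)^(1-(p:ℤ)) ≤ |z| := by
  obtain ⟨m, e, hm, _, _, rfl⟩ := hz
  have h2 : (0:ℝ) < (2:ℝ) ^ (e + 1 - (p:ℤ)) := zpow_pos two_pos _
  have habs : |(m:ℝ) * (2:ℝ) ^ (e + 1 - (p:ℤ))| = ((|m|:ℤ):ℝ) * (2:ℝ) ^ (e + 1 - (p:ℤ)) := by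
    rw [abs_mul, abs_of_pos h2, Int.cast_abs]
  rw [habs] at h1 ⊢
  have hmR : ((|m|:ℤ):ℝ) < (2:ℝ)^p := by exact_mod_cast hm
  -- e ≥ 0
  have he0 : 0 ≤ e := by
    by_contra hneg
    push_neg at hneg
    have hlt : ((|m|:ℤ):ℝ) * (2:ℝ) ^ (e + 1 - (p:ℤ)) < (2:ℝ)^p * (2:ℝ) ^ (e + 1 - (p:ℤ)) :=
      mul_lt_mul_of_pos_right hmR h2
    have heq : (2:ℝ)^p * (2:ℝ) ^ (e + 1 - (p:ℤ)) = (2:ℝ) ^ (e+1) := by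
      rw [← zpow_natCast (2:ℝ) p, ← zpow_add₀ (two_ne_zero (α := ℝ))]; congr 1; ring
    have : (2:ℝ) ^ (e+1) ≤ 1 := by
      have := zpow_le_zpow_right₀ (one_le_two (α := ℝ)) (show e + 1 ≤ 0 by omega)
      simpa using this
    linarith
  -- write n = |m| * 2^(e.toNat)
  set n : ℤ := |m| * 2 ^ e.toNat with hn
  have hcast : ((n:ℤ):ℝ) * (2:ℝ)^(1-(p:ℤ)) = ((|m|:ℤ):ℝ) * (2:ℝ) ^ (e + 1 - (p:ℤ)) := by
    push_cast [hn]
    rw [mul_assoc, ← zpow_natCast (2:ℝ) e.toNat, ← zpow_add₀ (two_ne_zero (α := ℝ))]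
    congr 2
    omega
  have hJ : (2:ℝ)^(p-1) * (2:ℝ)^(1-(p:ℤ)) = 1 := by
    rw [← zpow_natCast (2:ℝ) (p-1), ← zpow_add₀ (two_ne_zero (α := ℝ)),
      show ((p-1:ℕ):ℤ) + (1-(p:ℤ)) = 0 by omega, zpow_zero]
  have hε : (0:ℝ) < (2:ℝ)^(1-(p:ℤ)) := zpow_pos two_pos _
  rw [← hcast] at h1 ⊢
  have hnl : (2:ℝ)^(p-1) < (n:ℝ) := by
    by_contra hle
    push_neg at hle
    have := mul_le_mul_of_nonneg_right hle (le_of_lt hε)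
    rw [hJ] at this
    linarith
  have hnz : (2:ℤ)^(p-1) + 1 ≤ n := by
    have : (2:ℤ)^(p-1) < n := by exact_mod_cast hnl
    omega
  have hnr : (2:ℝ)^(p-1) + 1 ≤ (n:ℝ) := by exact_mod_cast hnz
  calc 1 + (2:ℝ)^(1-(p:ℤ)) = ((2:ℝ)^(p-1) + 1) * (2:ℝ)^(1-(p:ℤ)) := by
        rw [add_mul, hJ]; ring
    _ ≤ (n:ℝ) * (2:ℝ)^(1-(p:ℤ)) := mul_le_mul_of_nonneg_right hnr (le_of_lt hε)

lemma thr_le (p : ℕ) (hp : 2 ≤ p) (emax : ℤ) :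
    fmax p emax + (2:ℝ)^(emax - (p:ℤ)) ≤ (1 + (2:ℝ)^(1-(p:ℤ))) * fmax p emax := by
  set ε := (2:ℝ)^(1-(p:ℤ)) with hεdef
  have hεpos : 0 < ε := zpow_pos two_pos _
  have hεle : ε ≤ 1 := by
    apply zpow_le_one_of_nonpos₀ one_le_two (by omega)
  have hE : (0:ℝ) < (2:ℝ)^emax := zpow_pos two_pos _
  have h1 : (2:ℝ)^(emax-(p:ℤ)) * 2 = (2:ℝ)^emax * ε := by
    rw [hεdef, ← zpow_add₀ (two_ne_zero (α := ℝ)), ← zpow_add_one₀ (two_ne_zero (α := ℝ))]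
    congr 1
    ring
  rw [fmax]
  nlinarith [mul_pos hE hεpos, sq_nonneg ε]

/-- `|z| ⊗ f_max ≤ f_max` iff `|z| ≤ 1`; in particular for `z = 1 + 2^(1-p)`
(the successor of `1`), `z ⊗ f_max = +∞`. -/
theorem mul_fmax_overflow_iff (p : ℕ) (hp : 2 ≤ p) (emin emax : ℤ)
    (hemin : emin ≤ 0) (hemax : 1 ≤ emax)
    (rnd : ℝ → EReal) (hrnd : IsRNEx p emin emax rnd) :
    (∀ z ∈ FF p emin emax,
      (rnd (|z| * fmax p emax) ≤ ((fmax p emax : ℝ) : EReal) ↔ |z| ≤ 1)) ∧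
    rnd ((1 + (2 : ℝ) ^ (1 - (p : ℤ))) * fmax p emax) = ⊤ := by
  have hfmaxpos : 0 < fmax p emax := by
    rw [fmax]
    have hε : (2:ℝ)^(1-(p:ℤ)) ≤ 1 := zpow_le_one_of_nonpos₀ one_le_two (by omega)
    have hE : (0:ℝ) < (2:ℝ)^emax := zpow_pos two_pos _
    nlinarith
  have hthr : fmax p emax + (2:ℝ)^(emax-(p:ℤ)) ≤ (1 + (2:ℝ)^(1-(p:ℤ))) * fmax p emax :=
    thr_le p hp emax
  constructor
  · intro z hz
    constructor
    · intro h
      by_contra hgt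
      push_neg at hgt
      have hgap := FF_gap p hp emin emax z hz hgt
      have hx : fmax p emax + (2:ℝ)^(emax-(p:ℤ)) ≤ |z| * fmax p emax := by
        calc fmax p emax + (2:ℝ)^(emax-(p:ℤ))
            ≤ (1 + (2:ℝ)^(1-(p:ℤ))) * fmax p emax := hthr
          _ ≤ |z| * fmax p emax := mul_le_mul_of_nonneg_right hgap hfmaxpos.le
      rw [(hrnd _).1 hx] at h
      exact absurd (top_le_iff.mp h) (EReal.coe_ne_top _)
    · intro hle
      have hx : |z| * fmax p emax ≤ fmax p emax := by
        nlinarith [abs_nonneg z]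
      have hεpos : (0:ℝ) < (2:ℝ)^(emax-(p:ℤ)) := zpow_pos two_pos _
      have hxabs : |(|z| * fmax p emax)| < fmax p emax + (2:ℝ)^(emax-(p:ℤ)) := by
        rw [abs_of_nonneg (mul_nonneg (abs_nonneg z) hfmaxpos.le)]
        linarith
      obtain ⟨w, hw, hrw, _, _⟩ := (hrnd _).2.2 hxabs
      rw [hrw]
      have hwle : w ≤ fmax p emax :=
        le_trans (le_abs_self w) (FF_abs_le p (by omega) emin emax w hw)
      exact_mod_cast hwle
  · exact (hrnd _).1 hthr
end

section
/- Let z be a positive normal float with 1/2 < z < 1 in an IEEE 754 binary format with precision p. Then z ⊗ f_max = z⁻ · 2^{e_max+1} exactly, where z⁻ = z − 2^{−p} is the predecessor of z and f_max = (2 − 2^{1−p})·2^{e_max}. -/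
open scoped Classical

/-- auxiliary lemmas -/
lemma two_zpow_mul (a b : ℤ) : (2:ℝ)^a * (2:ℝ)^b = (2:ℝ)^(a+b) :=
  (zpow_add₀ two_ne_zero a b).symm

lemma two_zpow_pos (a : ℤ) : (0:ℝ) < 2^a := by positivity

/-- A representable `x` with `1/2 < x < 1` is an integer multiple of `2^(-p)`. -/
lemma lemA (p : ℕ) (hp : 1 ≤ p) (emin emax : ℤ) (x : ℝ) (hx : x ∈ FF p emin emax)
    (h1 : 1/2 < x) (h2 : x < 1) :
    ∃ k : ℤ, x = (k:ℝ) * (2:ℝ)^(-(p:ℤ)) ∧ 2^(p-1) < k ∧ k < 2^p := by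
  obtain ⟨m, e, hm, _, _, hxe⟩ := hx
  have hmR : (m:ℝ) < 2^(p:ℤ) := by
    have : (m:ℝ) ≤ |(m:ℝ)| := le_abs_self _
    have h2 : |(m:ℝ)| < 2^(p:ℤ) := by
      rw [← Int.cast_abs]
      exact_mod_cast (by exact_mod_cast hm : (|m| : ℤ) < 2^p)
    linarith
  have he : -1 ≤ e := by
    by_contra h
    push_neg at h
    have hee : e + 1 - (p:ℤ) ≤ -1 - (p:ℤ) := by omega
    have : x < 2^(p:ℤ) * 2^(e+1-(p:ℤ)) := by
      rw [hxe]
      exact mul_lt_mul_of_pos_right hmR (two_zpow_pos _)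
    rw [two_zpow_mul] at this
    have h3 : (2:ℝ)^((p:ℤ)+(e+1-(p:ℤ))) ≤ 2^(-1:ℤ) := by
      apply zpow_le_zpow_right₀ (by norm_num) (by omega)
    have h4 : (2:ℝ)^(-1:ℤ) = 1/2 := by norm_num
    rw [h4] at h3
    linarith
  set k : ℤ := m * 2^(e+1).toNat with hkdef
  have hk : x = (k:ℝ) * (2:ℝ)^(-(p:ℤ)) := by
    rw [hxe]
    have : (2:ℝ)^(e+1-(p:ℤ)) = 2^(e+1) * 2^(-(p:ℤ)) := by
      rw [two_zpow_mul]; ring_nf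
    rw [this, ← mul_assoc, hkdef]
    push_cast
    rw [← zpow_natCast (2:ℝ) (e+1).toNat, Int.toNat_of_nonneg (by omega)]
  have hc1 : ((2^(p-1):ℤ):ℝ) = (2:ℝ)^((p:ℤ)-1) := by
    push_cast
    rw [← zpow_natCast (2:ℝ) (p-1)]
    congr 1
    omega
  have hc2 : ((2^p:ℤ):ℝ) = (2:ℝ)^(p:ℤ) := by
    push_cast
    rw [← zpow_natCast (2:ℝ) p]
  refine ⟨k, hk, ?_, ?_⟩
  · have hlt : (2:ℝ)^((p:ℤ)-1) * 2^(-(p:ℤ)) < (k:ℝ) * 2^(-(p:ℤ)) := by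
      rw [two_zpow_mul, ← hk]
      have : ((p:ℤ)-1 + -(p:ℤ)) = -1 := by ring
      rw [this]
      norm_num
      linarith
    have := lt_of_mul_lt_mul_right hlt (le_of_lt (two_zpow_pos (-(p:ℤ))))
    rw [← hc1] at this
    exact_mod_cast this
  · have hlt : (k:ℝ) * 2^(-(p:ℤ)) < (2:ℝ)^(p:ℤ) * 2^(-(p:ℤ)) := by
      rw [two_zpow_mul, ← hk]
      have : ((p:ℤ) + -(p:ℤ)) = 0 := by ring
      rw [this]
      norm_num
      linarith
    have := lt_of_mul_lt_mul_right hlt (le_of_lt (two_zpow_pos (-(p:ℤ))))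
    rw [← hc2] at this
    exact_mod_cast this

lemma lemB (p : ℕ) (hp : 1 ≤ p) (emin emax : ℤ) (y : ℝ) (hy : y ∈ FF p emin emax)
    (k : ℤ) (hk1 : 2^(p-1) < k)
    (hgt : ((k:ℝ)-1) * (2:ℝ)^(emax+1-(p:ℤ)) < y) :
    (k:ℝ) * (2:ℝ)^(emax+1-(p:ℤ)) ≤ y := by
  obtain ⟨m, e, hm, _, hee, hye⟩ := hy
  have hmR : (m:ℝ) < 2^(p:ℤ) := by
    have h0 : (m:ℝ) ≤ |(m:ℝ)| := le_abs_self _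
    have h2 : |(m:ℝ)| < 2^(p:ℤ) := by
      rw [← Int.cast_abs]
      exact_mod_cast (by exact_mod_cast hm : (|m| : ℤ) < 2^p)
    linarith
  have hc1 : ((2^(p-1):ℤ):ℝ) = (2:ℝ)^((p:ℤ)-1) := by
    push_cast
    rw [← zpow_natCast (2:ℝ) (p-1)]
    congr 1
    omega
  have hkR : (2:ℝ)^((p:ℤ)-1) ≤ (k:ℝ) - 1 := by
    have h7 : (2:ℤ)^(p-1) ≤ k - 1 := by omega
    have h8 : ((2^(p-1):ℤ):ℝ) ≤ ((k-1:ℤ):ℝ) := by exact_mod_cast h7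
    rw [hc1] at h8
    push_cast at h8
    linarith
  have hybig : (2:ℝ)^emax < y := by
    have h5 : (2:ℝ)^((p:ℤ)-1) * 2^(emax+1-(p:ℤ)) ≤ ((k:ℝ)-1) * 2^(emax+1-(p:ℤ)) :=
      mul_le_mul_of_nonneg_right hkR (le_of_lt (two_zpow_pos _))
    rw [two_zpow_mul] at h5
    have h6 : ((p:ℤ)-1 + (emax+1-(p:ℤ))) = emax := by ring
    rw [h6] at h5
    linarith
  have he : e = emax := by
    by_contra h
    have helt : e + 1 ≤ emax := by omega
    have : y < 2^(p:ℤ) * 2^(e+1-(p:ℤ)) := by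
      rw [hye]
      exact mul_lt_mul_of_pos_right hmR (two_zpow_pos _)
    rw [two_zpow_mul] at this
    have h3 : (2:ℝ)^((p:ℤ)+(e+1-(p:ℤ))) ≤ 2^emax :=
      zpow_le_zpow_right₀ (by norm_num) (by omega)
    linarith
  subst he
  rw [hye] at hgt ⊢
  have hkm : ((k:ℝ)-1) < (m:ℝ) := lt_of_mul_lt_mul_right hgt (le_of_lt (two_zpow_pos _))
  have : k ≤ m := by
    have : (k:ℝ) - 1 < (m:ℝ) := hkm
    have : (k:ℤ) - 1 < m := by exact_mod_cast (by push_cast; linarith : ((k-1:ℤ):ℝ) < (m:ℝ))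
    omega
  exact mul_le_mul_of_nonneg_right (by exact_mod_cast this) (le_of_lt (two_zpow_pos _))

/-- For a float `z` with `1/2 < z < 1`, `z ⊗ f_max = z⁻ · 2^(emax+1)` exactly,
where `z⁻ = z - 2^(-p)`. -/
theorem mul_fmax_half_one (p : ℕ) (hp : 2 ≤ p) (emin emax : ℤ)
    (hemin : emin ≤ -1) (hemax : 0 ≤ emax)
    (rnd : ℝ → ℝ)
    (hrnd : IsRNE (FF p emin emax) (evenFF p emin emax) rnd)
    (z : ℝ) (hz : z ∈ FF p emin emax)
    (h1 : 1 / 2 < z) (h2 : z < 1) :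
    rnd (z * fmax p emax) = predF (FF p emin emax) z * (2 : ℝ) ^ (emax + 1) ∧
      predF (FF p emin emax) z = z - (2 : ℝ) ^ (-(p : ℤ)) := by
  have hp1 : 1 ≤ p := by omega
  obtain ⟨k, hzk, hk1, hk2⟩ := lemA p hp1 emin emax z hz h1 h2
  have hc1 : ((2^(p-1):ℤ):ℝ) = (2:ℝ)^((p:ℤ)-1) := by
    push_cast
    rw [← zpow_natCast (2:ℝ) (p-1)]
    congr 1
    omega
  have hc2 : ((2^p:ℤ):ℝ) = (2:ℝ)^(p:ℤ) := by
    push_cast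
    rw [← zpow_natCast (2:ℝ) p]
  have hk1R : (2:ℝ)^((p:ℤ)-1) < (k:ℝ) := by
    rw [← hc1]; exact_mod_cast hk1
  have hk2R : (k:ℝ) < (2:ℝ)^(p:ℤ) := by
    rw [← hc2]; exact_mod_cast hk2
  have h2p : (2:ℝ)^(p:ℤ) = 2 * 2^((p:ℤ)-1) := by
    rw [mul_comm, ← zpow_add_one₀ (two_ne_zero (α := ℝ))]
    congr 1
    ring
  have hpos2 : (0:ℤ) < 2^(p-1) := by positivity
  have hkm1 : |k - 1| < 2^p := by
    rw [abs_of_nonneg (by linarith : (0:ℤ) ≤ k - 1)]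
    linarith
  set w : ℝ := ((k:ℝ) - 1) * (2:ℝ)^(-(p:ℤ)) with hw
  have hwF : w ∈ FF p emin emax := by
    refine ⟨k - 1, -1, hkm1, hemin, by omega, ?_⟩
    rw [show (-1 + 1 - (p:ℤ)) = -(p:ℤ) by ring]
    push_cast
    ring
  have hwz : w < z := by
    rw [hzk, hw]
    have := two_zpow_pos (-(p:ℤ))
    nlinarith
  have hwhalf : 1/2 ≤ w := by
    have e0 : (2:ℝ)^((p:ℤ)-1) * 2^(-(p:ℤ)) = 1/2 := by
      rw [two_zpow_mul, show ((p:ℤ)-1 + -(p:ℤ)) = -1 by ring]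
      norm_num
    have hk1' : (2:ℝ)^((p:ℤ)-1) + 1 ≤ (k:ℝ) := by
      have h7 : (2:ℤ)^(p-1) ≤ k - 1 := by omega
      have h8 : ((2^(p-1):ℤ):ℝ) ≤ ((k-1:ℤ):ℝ) := by exact_mod_cast h7
      rw [hc1] at h8
      push_cast at h8
      linarith
    have := two_zpow_pos (-(p:ℤ))
    nlinarith
  have hpred : predF (FF p emin emax) z = w := by
    apply IsGreatest.csSup_eq
    constructor
    · exact ⟨hwF, hwz⟩
    · rintro y ⟨hyF, hylt⟩
      by_contra h
      push_neg at h
      have hy1 : 1/2 < y := lt_of_le_of_lt hwhalf h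
      have hy2 : y < 1 := lt_trans hylt h2
      obtain ⟨k', hyk, hk1', hk2'⟩ := lemA p hp1 emin emax y hyF hy1 hy2
      have hkk : k' < k := by
        rw [hzk, hyk] at hylt
        have := lt_of_mul_lt_mul_right hylt (le_of_lt (two_zpow_pos (-(p:ℤ))))
        exact_mod_cast this
      have : y ≤ w := by
        rw [hyk, hw]
        have hk'R : (k':ℝ) ≤ (k:ℝ) - 1 := by
          have : (k':ℤ) ≤ k - 1 := by omega
          have h8 : ((k':ℤ):ℝ) ≤ ((k-1:ℤ):ℝ) := by exact_mod_cast this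
          push_cast at h8
          linarith
        exact mul_le_mul_of_nonneg_right hk'R (le_of_lt (two_zpow_pos _))
      linarith
  set c : ℝ := (2:ℝ)^(emax+1-2*(p:ℤ)) with hcdef
  have hcpos : 0 < c := two_zpow_pos _
  set x : ℝ := z * fmax p emax with hxdef
  set t : ℝ := w * (2:ℝ)^(emax+1) with htdef
  have e2 : (2:ℝ)^(-(p:ℤ)) * (2:ℝ)^emax * 2 = (2:ℝ)^(p:ℤ) * c := by
    rw [two_zpow_mul, ← zpow_add_one₀ (two_ne_zero (α := ℝ)), hcdef, two_zpow_mul]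
    congr 1
    ring
  have e1 : (2:ℝ)^(-(p:ℤ)) * ((2:ℝ)^(1-(p:ℤ)) * (2:ℝ)^emax) = c := by
    rw [two_zpow_mul, two_zpow_mul, hcdef]
    congr 1
    ring
  have hx : x = ((k:ℝ) * 2^(p:ℤ) - k) * c := by
    calc x = (k:ℝ) * ((2:ℝ)^(-(p:ℤ)) * 2^emax * 2)
        - (k:ℝ) * ((2:ℝ)^(-(p:ℤ)) * ((2:ℝ)^(1-(p:ℤ)) * 2^emax)) := by
          rw [hxdef, hzk, fmax]; ring
      _ = ((k:ℝ) * 2^(p:ℤ) - k) * c := by rw [e1, e2]; ring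
  have e3 : (2:ℝ)^(-(p:ℤ)) * (2:ℝ)^(emax+1) = 2^(p:ℤ) * c := by
    rw [two_zpow_mul, hcdef, two_zpow_mul]
    congr 1
    ring
  have e4 : (2:ℝ)^(emax+1-(p:ℤ)) = 2^(p:ℤ) * c := by
    rw [hcdef, two_zpow_mul]
    congr 1
    ring
  have ht : t = ((k:ℝ) - 1) * (2^(p:ℤ) * c) := by
    rw [htdef, hw, mul_assoc, e3]
  have htF : t ∈ FF p emin emax := by
    refine ⟨k - 1, emax, hkm1, by omega, le_refl _, ?_⟩
    rw [e4, ht]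
    push_cast
    ring
  have hdpos : 0 < ((2:ℝ)^(p:ℤ) - k) * c := by
    have : 0 < (2:ℝ)^(p:ℤ) - k := by linarith
    positivity
  have hxt : x - t = ((2:ℝ)^(p:ℤ) - k) * c := by
    rw [hx, ht]; ring
  have hklt : (2:ℝ)^(p:ℤ) - (k:ℝ) < (k:ℝ) := by
    rw [h2p]; linarith
  have hstrict : ∀ y ∈ FF p emin emax, y ≠ t → |x - t| < |x - y| := by
    intro y hyF hyne
    rcases lt_trichotomy y t with hlt | heq | hgt
    · rw [abs_of_pos (by linarith [hdpos, hxt] : 0 < x - t),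
        abs_of_pos (by linarith [hdpos, hxt] : 0 < x - y)]
      linarith
    · exact absurd heq hyne
    · have hyge : (k:ℝ) * (2:ℝ)^(emax+1-(p:ℤ)) ≤ y := by
        apply lemB p hp1 emin emax y hyF k hk1
        rw [e4, ← ht]
        exact hgt
      rw [e4] at hyge
      have hkpos : (0:ℝ) < k := by
        have := two_zpow_pos ((p:ℤ)-1); linarith
      have hkcpos : 0 < (k:ℝ) * c := mul_pos hkpos hcpos
      have hexp : x = (k:ℝ) * ((2:ℝ)^(p:ℤ) * c) - (k:ℝ) * c := by rw [hx]; ring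
      have hyxd : (k:ℝ) * c ≤ y - x := by linarith
      have hyx : x < y := by linarith
      have hd2 : ((2:ℝ)^(p:ℤ) - k) * c < (k:ℝ) * c := mul_lt_mul_of_pos_right hklt hcpos
      rw [abs_of_pos (by linarith [hdpos, hxt] : 0 < x - t),
        abs_of_neg (by linarith : x - y < 0)]
      rw [hxt]
      linarith
  obtain ⟨hrF, hrnear, -⟩ := hrnd x
  have hrt : rnd x = t := by
    by_contra hne
    have h5 := hrnear t htF
    have h6 := hstrict (rnd x) hrF hne
    linarith
  constructor
  · rw [hpred, ← htdef]; exact hrt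
  · rw [hpred, hw, hzk]
    ring
end

section
/- Let z be a positive subnormal float with 2^{e_min−1} < z < 2^{e_min}, written z = m·2^{e_min−1} with 1 < m < 2. Then z ⊗ f_max = (z·2^{e_max+1})⁻ exactly, i.e., floating-point multiplication of z by f_max = (2−2^{1−p})·2^{e_max} rounds to the predecessor of z·2^{e_max+1}. -/
open scoped Classical

/-- For a subnormal float `z` with `2^(emin-1) < z < 2^emin`,
`z ⊗ f_max = (z · 2^(emax+1))⁻` exactly. -/
theorem mul_fmax_subnormal (p : ℕ) (hp : 2 ≤ p) (emin emax : ℤ)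
    (hemin : emin ≤ 0) (hemax : 0 ≤ emax)
    (rnd : ℝ → ℝ)
    (hrnd : IsRNE (FF p emin emax) (evenFF p emin emax) rnd)
    (z : ℝ) (hz : z ∈ FF p emin emax)
    (h1 : (2 : ℝ) ^ (emin - 1) < z) (h2 : z < (2 : ℝ) ^ emin) :
    rnd (z * fmax p emax) = predF (FF p emin emax) (z * (2 : ℝ) ^ (emax + 1)) := by
  classical
  have h2ne : (2:ℝ) ≠ 0 := by norm_num
  obtain ⟨m, e, hm, hee1, hee2, hzeq⟩ := hz
  set P : ℤ := (p : ℤ) with hPdef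
  -- z is positive
  have hzpos : (0:ℝ) < z := lt_trans (zpow_pos (by norm_num) _) h1
  -- rewrite z with exponent emin
  have htoNat : ((2:ℝ) ^ ((e - emin).toNat : ℕ)) = 2 ^ (e - emin) := by
    rw [← zpow_natCast, Int.toNat_of_nonneg (by omega)]
  set M : ℤ := m * 2 ^ (e - emin).toNat with hMdef
  have hMz : z = (M : ℝ) * 2 ^ (emin + 1 - P) := by
    rw [hzeq, hMdef]
    push_cast
    rw [htoNat]
    simp only [zpow_sub₀ h2ne, zpow_add₀ h2ne, zpow_one]
    field_simp
  -- integer power facts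
  have hpow1 : (2:ℤ) ^ (p - 1) = 2 * 2 ^ (p - 2) := by
    rw [← pow_succ']; congr 1; omega
  have hpow0 : (2:ℤ) ^ p = 2 * 2 ^ (p - 1) := by
    rw [← pow_succ']; congr 1; omega
  have hcastT : (((2:ℤ) ^ (p - 1) : ℤ) : ℝ) = 2 ^ (P - 1) := by
    push_cast
    rw [← zpow_natCast]
    congr 1
    omega
  have hcastT2 : (((2:ℤ) ^ (p - 2) : ℤ) : ℝ) = 2 ^ (P - 2) := by
    push_cast
    rw [← zpow_natCast]
    congr 1
    omega
  -- bounds on M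
  have hMub : M < 2 ^ (p - 1) := by
    have h2' : (M : ℝ) * 2 ^ (emin + 1 - P) < 2 ^ (P - 1) * 2 ^ (emin + 1 - P) := by
      rw [← hMz]
      calc z < 2 ^ emin := h2
        _ = 2 ^ (P - 1) * 2 ^ (emin + 1 - P) := by
            rw [← zpow_add₀ h2ne]; congr 1; ring
    have := lt_of_mul_lt_mul_right h2' (zpow_pos (by norm_num : (0:ℝ) < 2) (emin + 1 - P)).le
    rw [← hcastT] at this
    exact_mod_cast this
  have hMlb : 2 ^ (p - 2) < M := by
    have h1' : (2:ℝ) ^ (P - 2) * 2 ^ (emin + 1 - P) < (M : ℝ) * 2 ^ (emin + 1 - P) := by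
      rw [← hMz]
      calc (2:ℝ) ^ (P - 2) * 2 ^ (emin + 1 - P) = 2 ^ (emin - 1) := by
            rw [← zpow_add₀ h2ne]; congr 1; ring
        _ < z := h1
    have := lt_of_mul_lt_mul_right h1' (zpow_pos (by norm_num : (0:ℝ) < 2) (emin + 1 - P)).le
    rw [← hcastT2] at this
    exact_mod_cast this
  -- real bounds on M
  have hMubR : (M : ℝ) < 2 ^ (P - 1) := by rw [← hcastT]; exact_mod_cast hMub
  have hMlbR : (2:ℝ) ^ (P - 2) < (M : ℝ) := by rw [← hcastT2]; exact_mod_cast hMlb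
  have hTPsplit : (2:ℝ) ^ (P - 1) = 2 * 2 ^ (P - 2) := by
    simp only [zpow_sub₀ h2ne, zpow_one]
    field_simp
  have h2M1 : (2:ℝ) ^ (P - 1) ≤ 2 * (M : ℝ) - 1 := by
    have : (2:ℤ) ^ (p - 1) ≤ 2 * M - 1 := by omega
    calc (2:ℝ) ^ (P - 1) = (((2:ℤ) ^ (p - 1) : ℤ) : ℝ) := hcastT.symm
      _ ≤ ((2 * M - 1 : ℤ) : ℝ) := by exact_mod_cast this
      _ = 2 * (M : ℝ) - 1 := by push_cast; ring
  -- the key quantities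
  set δ : ℝ := 2 ^ (emin + emax + 2 - P - P) with hδdef
  have hδpos : (0:ℝ) < δ := zpow_pos (by norm_num) _
  set G : ℝ := 2 ^ (emin + emax + 1 - P) with hGdef
  have hGpos : (0:ℝ) < G := zpow_pos (by norm_num) _
  have hGδ : G = 2 ^ (P - 1) * δ := by
    rw [hGdef, hδdef, ← zpow_add₀ h2ne]; congr 1; ring
  set pred : ℝ := ((2 * M - 1 : ℤ) : ℝ) * G with hpreddef
  -- v and x in normal form
  have hv : z * 2 ^ (emax + 1) = (2 * (M : ℝ)) * G := by
    rw [hMz, hGdef, mul_assoc, ← zpow_add₀ h2ne]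
    rw [show emin + 1 - P + (emax + 1) = emin + emax + 1 - P + 1 by ring,
      zpow_add₀ h2ne, zpow_one]
    ring
  have hx : z * fmax p emax = (2 * (M : ℝ)) * G - (M : ℝ) * δ := by
    rw [hMz, fmax, hGdef, hδdef]
    simp only [hPdef]
    simp only [zpow_sub₀ h2ne, zpow_add₀ h2ne, zpow_one, zpow_natCast]
    field_simp
  have hpredδ : pred = (2 * (M : ℝ) - 1) * (2 ^ (P - 1) * δ) := by
    rw [hpreddef, hGδ]; push_cast; ring
  -- pred is a float
  have hpredFF : pred ∈ FF p emin emax := by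
    refine ⟨2 * M - 1, emin + emax, ?_, by omega, by omega, ?_⟩
    · have hMpos : 0 < M := by
        have : (0:ℤ) < 2 ^ (p - 2) := by positivity
        omega
      rw [abs_of_pos (by omega)]
      omega
    · rw [hpreddef, hGdef]
  -- the gap lemma: any float below v is at most pred
  have hgap : ∀ y ∈ FF p emin emax, y < z * 2 ^ (emax + 1) → y ≤ pred := by
    rintro y ⟨n, f, hn, hf1, hf2, rfl⟩ hyv
    by_cases hfE : emin + emax ≤ f
    · -- y is a multiple of G
      set k : ℤ := n * 2 ^ (f - (emin + emax)).toNat with hkdef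
      have hyk : (n : ℝ) * 2 ^ (f + 1 - P) = (k : ℝ) * G := by
        rw [hkdef, hGdef]
        push_cast
        rw [← zpow_natCast (2:ℝ) (f - (emin + emax)).toNat,
          Int.toNat_of_nonneg (by omega)]
        simp only [zpow_sub₀ h2ne, zpow_add₀ h2ne, zpow_one]
        field_simp
      rw [hyk] at hyv ⊢
      rw [hv] at hyv
      have hkM : (k : ℝ) < 2 * (M : ℝ) := lt_of_mul_lt_mul_right hyv hGpos.le
      have hkM' : k ≤ 2 * M - 1 := by
        have : k < 2 * M := by exact_mod_cast hkM
        omega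
      rw [hpreddef]
      have : (k : ℝ) ≤ ((2 * M - 1 : ℤ) : ℝ) := by exact_mod_cast hkM'
      exact mul_le_mul_of_nonneg_right this (le_of_lt hGpos)
    · -- y is small
      have hybound : (n : ℝ) * 2 ^ (f + 1 - P) < 2 ^ (emin + emax) := by
        calc (n : ℝ) * 2 ^ (f + 1 - P) ≤ |(n : ℝ)| * 2 ^ (f + 1 - P) := by
              exact mul_le_mul_of_nonneg_right (le_abs_self _) (le_of_lt (zpow_pos (by norm_num) _))
          _ < 2 ^ P * 2 ^ (f + 1 - P) := by
              refine mul_lt_mul_of_pos_right ?_ (zpow_pos (by norm_num) _)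
              have : |(n:ℝ)| = ((|n| : ℤ) : ℝ) := by push_cast; ring
              rw [this]
              have : ((|n| : ℤ) : ℝ) < (((2:ℤ)^p : ℤ) : ℝ) := by exact_mod_cast hn
              calc ((|n| : ℤ) : ℝ) < (((2:ℤ)^p : ℤ) : ℝ) := this
                _ = 2 ^ P := by push_cast; rw [← zpow_natCast]
          _ = 2 ^ (f + 1) := by rw [← zpow_add₀ h2ne]; congr 1; ring
          _ ≤ 2 ^ (emin + emax) := by
              apply zpow_le_zpow_right₀ (by norm_num : (1:ℝ) ≤ 2)
              omega
      have hpredge : (2:ℝ) ^ (emin + emax) ≤ pred := by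
        rw [hpredδ]
        calc (2:ℝ) ^ (emin + emax) = 2 ^ (P - 1) * (2 ^ (P - 1) * δ) := by
              rw [hδdef, ← zpow_add₀ h2ne, ← zpow_add₀ h2ne]; congr 1; ring
          _ ≤ (2 * (M : ℝ) - 1) * (2 ^ (P - 1) * δ) := by
              refine mul_le_mul_of_nonneg_right h2M1 (le_of_lt ?_)
              exact mul_pos (zpow_pos (by norm_num) _) hδpos
      linarith
  -- pred is the predecessor of v
  have hpredlt : pred < z * 2 ^ (emax + 1) := by
    rw [hv, hpredδ, ← hGδ]
    have : (2 * (M : ℝ) - 1) < 2 * (M : ℝ) := by linarith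
    exact mul_lt_mul_of_pos_right this hGpos
  have hpredF : predF (FF p emin emax) (z * 2 ^ (emax + 1)) = pred := by
    apply IsGreatest.csSup_eq
    exact ⟨⟨hpredFF, hpredlt⟩, fun y hy => hgap y hy.1 hy.2⟩
  rw [hpredF]
  -- now show rnd x = pred
  obtain ⟨hmem, hmin, -⟩ := hrnd (z * fmax p emax)
  set r := rnd (z * fmax p emax) with hrdef
  have hle := hmin pred hpredFF
  -- x - pred and v - x
  have hxpred : z * fmax p emax - pred = (2 ^ (P - 1) - (M : ℝ)) * δ := by
    rw [hx, hpredδ, hGδ]; ring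
  have hxpredpos : (0:ℝ) < z * fmax p emax - pred := by
    rw [hxpred]
    exact mul_pos (by linarith) hδpos
  have hvx : z * 2 ^ (emax + 1) - z * fmax p emax = (M : ℝ) * δ := by
    rw [hv, hx, hGδ]; ring
  have hkey : z * fmax p emax - pred < z * 2 ^ (emax + 1) - z * fmax p emax := by
    rw [hxpred, hvx]
    have : (2:ℝ) ^ (P - 1) - (M : ℝ) < (M : ℝ) := by
      rw [hTPsplit]; linarith
    exact mul_lt_mul_of_pos_right this hδpos
  have habs : |z * fmax p emax - pred| = z * fmax p emax - pred := abs_of_pos hxpredpos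
  by_contra hne
  rcases lt_trichotomy r pred with hlt | heq | hgt
  · -- r < pred < x : x - r > x - pred
    have : z * fmax p emax - pred < z * fmax p emax - r := by linarith
    have h' : |z * fmax p emax - r| ≤ z * fmax p emax - pred := habs ▸ hle
    have h'' : z * fmax p emax - r ≤ |z * fmax p emax - r| := le_abs_self _
    linarith
  · exact hne heq
  · -- r > pred, so r ≥ v
    have hrv : z * 2 ^ (emax + 1) ≤ r := by
      by_contra hrv
      push_neg at hrv
      exact absurd (hgap r hmem hrv) (not_le.mpr hgt)
    have h' : |z * fmax p emax - r| ≤ z * fmax p emax - pred := habs ▸ hle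
    have h'' : r - z * fmax p emax ≤ |z * fmax p emax - r| := by
      rw [abs_sub_comm]; exact le_abs_self _
    linarith
end

section
/- Let z be an IEEE 754 float with 1 + 2^{1−p} < |z| ≤ f_max (strictly greater than the successor of 1). Then f_max ⊘ (f_max ⊘ |z|⁻⁻) < |z|, where v⁻⁻ denotes the predecessor of the predecessor of v and ⊘ is round-to-nearest ties-to-even division. -/
open scoped Classical

section Aux

variable {p : ℕ} {emin emax : ℤ}

lemma two_ne : (2:ℝ) ≠ 0 := by norm_num

lemma cast_two_pow (k : ℕ) : ((2^k : ℤ) : ℝ) = (2:ℝ)^(k:ℤ) := by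
  push_cast; rw [zpow_natCast]

lemma FF_finite : (FF p emin emax).Finite := by
  have h : FF p emin emax ⊆ (fun q : ℤ × ℤ => (q.1:ℝ) * (2:ℝ)^(q.2+1-(p:ℤ))) ''
      (Set.Icc (-(2^p:ℤ)) (2^p) ×ˢ Set.Icc emin emax) := by
    rintro x ⟨m, e, hm, h1, h2, rfl⟩
    obtain ⟨hm1, hm2⟩ := abs_lt.1 hm
    exact ⟨(m, e), ⟨⟨hm1.le, hm2.le⟩, h1, h2⟩, rfl⟩
  exact Set.Finite.subset (((Set.finite_Icc _ _).prod (Set.finite_Icc _ _)).image _) h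

lemma predF_spec (x y0 : ℝ) (hy0 : y0 ∈ FF p emin emax) (hy0x : y0 < x) :
    predF (FF p emin emax) x ∈ FF p emin emax ∧ predF (FF p emin emax) x < x ∧
      y0 ≤ predF (FF p emin emax) x := by
  have hS : ({y | y ∈ FF p emin emax ∧ y < x}).Finite :=
    FF_finite.subset (fun y hy => hy.1)
  have hne : ({y | y ∈ FF p emin emax ∧ y < x}).Nonempty := ⟨y0, hy0, hy0x⟩
  have hmem := hne.csSup_mem hS
  exact ⟨hmem.1, hmem.2, le_csSup hS.bddAbove ⟨hy0, hy0x⟩⟩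

lemma one_mem_FF (hp : 1 ≤ p) (hemin : emin ≤ 0) (hemax : 0 ≤ emax) :
    (1:ℝ) ∈ FF p emin emax := by
  refine ⟨2^(p-1), 0, ?_, hemin, hemax, ?_⟩
  · rw [abs_of_nonneg (by positivity)]
    exact pow_lt_pow_right₀ (by norm_num) (by omega)
  · rw [cast_two_pow, ← zpow_add₀ two_ne]
    rw [show ((p-1:ℕ):ℤ) + (0 + 1 - (p:ℤ)) = 0 by omega]
    norm_num

lemma succ_one_mem_FF (hp : 2 ≤ p) (hemin : emin ≤ 0) (hemax : 0 ≤ emax) :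
    1 + (2:ℝ)^(1-(p:ℤ)) ∈ FF p emin emax := by
  refine ⟨2^(p-1) + 1, 0, ?_, hemin, hemax, ?_⟩
  · rw [abs_of_nonneg (by positivity)]
    have h1 : (2:ℤ)^(p-1) < 2^p := pow_lt_pow_right₀ (by norm_num) (by omega)
    have h2 : (2:ℤ)^1 ≤ 2^(p-1) := pow_le_pow_right₀ (by norm_num) (by omega)
    have h3 : (2:ℤ)^(p-1) * 2 = 2^p := by
      rw [← pow_succ]; congr 1; omega
    omega
  · have key : ((2:ℝ)^(p-1:ℕ)) * (2:ℝ)^(1-(p:ℤ)) = 1 := by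
      rw [← zpow_natCast (2:ℝ) (p-1), ← zpow_add₀ two_ne,
        show ((p-1:ℕ):ℤ) + (1-(p:ℤ)) = 0 by omega, zpow_zero]
    push_cast
    linear_combination -key


lemma abs_mem_FF {z : ℝ} (hz : z ∈ FF p emin emax) : |z| ∈ FF p emin emax := by
  obtain ⟨m, e, hm, h1, h2, rfl⟩ := hz
  refine ⟨|m|, e, by rwa [abs_abs], h1, h2, ?_⟩
  rw [abs_mul, abs_of_pos (a := (2:ℝ)^(e+1-(p:ℤ))) (by positivity)]
  push_cast
  ring

lemma FF_isMultiple {w : ℝ} (hw : w ∈ FF p emin emax) {E : ℤ} (hE : (2:ℝ)^E ≤ w) :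
    ∃ k : ℤ, w = (k:ℝ) * (2:ℝ)^(E+1-(p:ℤ)) := by
  obtain ⟨m, e, hm, -, -, rfl⟩ := hw
  rcases le_or_gt E e with h | h
  · refine ⟨m * 2^(e-E).toNat, ?_⟩
    push_cast
    rw [← zpow_natCast (2:ℝ) (e-E).toNat, Int.toNat_of_nonneg (by omega), mul_assoc,
      ← zpow_add₀ two_ne, show e - E + (E + 1 - (p:ℤ)) = e + 1 - (p:ℤ) by ring]
  · exfalso
    have hm' : ((m:ℝ)) < (2:ℝ)^(p:ℤ) := by
      calc (m:ℝ) ≤ |(m:ℝ)| := le_abs_self _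
      _ < (2:ℝ)^(p:ℤ) := by
          rw [← Int.cast_abs, ← cast_two_pow]; exact_mod_cast hm
    have hpos : (0:ℝ) < (2:ℝ)^(e+1-(p:ℤ)) := by positivity
    have h1 : (m:ℝ) * (2:ℝ)^(e+1-(p:ℤ)) < (2:ℝ)^(p:ℤ) * (2:ℝ)^(e+1-(p:ℤ)) :=
      mul_lt_mul_of_pos_right hm' hpos
    rw [← zpow_add₀ two_ne, show (p:ℤ) + (e+1-(p:ℤ)) = e + 1 by ring] at h1
    have h2 : (2:ℝ)^(e+1) ≤ (2:ℝ)^E := zpow_le_zpow_right₀ (by norm_num) (by omega)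
    linarith

lemma fmax_eq : fmax p emax = ((2^p - 1 : ℤ):ℝ) * (2:ℝ)^(emax + 1 - (p:ℤ)) := by
  have e1 : (2:ℝ)^(p:ℤ) * (2:ℝ)^(emax+1-(p:ℤ)) = 2 * (2:ℝ)^emax := by
    rw [← zpow_add₀ two_ne, show (p:ℤ)+(emax+1-(p:ℤ)) = emax+1 by ring,
      zpow_add₀ two_ne, zpow_one]; ring
  have e2 : (2:ℝ)^(1-(p:ℤ)) * (2:ℝ)^emax = (2:ℝ)^(emax+1-(p:ℤ)) := by
    rw [← zpow_add₀ two_ne]; congr 1; ring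
  push_cast [cast_two_pow]
  rw [fmax, ← zpow_natCast (2:ℝ) p]
  linear_combination -e1 - e2

lemma fmax_mem (hp : 1 ≤ p) (hemin : emin ≤ 0) (hemax : 0 ≤ emax) :
    fmax p emax ∈ FF p emin emax := by
  refine ⟨2^p - 1, emax, ?_, by omega, le_refl _, fmax_eq⟩
  have : (0:ℤ) < 2^p := by positivity
  rw [abs_of_nonneg (by omega)]; omega

lemma fmax_pos (hp : 1 ≤ p) : 0 < fmax p emax := by
  have h : (2:ℝ)^(1-(p:ℤ)) ≤ (2:ℝ)^(0:ℤ) := zpow_le_zpow_right₀ (by norm_num) (by omega)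
  rw [zpow_zero] at h
  have : (0:ℝ) < (2:ℝ)^emax := by positivity
  rw [fmax]; nlinarith

lemma fmax_lt (hp : 1 ≤ p) : fmax p emax < (2:ℝ)^(emax + 1) := by
  have h : (0:ℝ) < (2:ℝ)^(1-(p:ℤ)) := by positivity
  have : (0:ℝ) < (2:ℝ)^emax := by positivity
  rw [fmax, zpow_add₀ two_ne, zpow_one]; nlinarith

end Aux

section Aux2
variable {p : ℕ} {emin emax : ℤ} {ev : ℝ → Prop}

lemma rnd_lt (rnd : ℝ → ℝ) (hrnd : IsRNE (FF p emin emax) ev rnd)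
    {a x s : ℝ} (ha : a ∈ FF p emin emax) (hax : a < x) (hs : s < (a + x)/2) :
    rnd s < x := by
  by_contra hcon
  push_neg at hcon
  have h1 := (hrnd s).2.1 a ha
  have h2 : rnd s - s ≤ |s - rnd s| := by rw [abs_sub_comm]; exact le_abs_self _
  have h3 : |s - a| < x - s := by
    rcases le_or_gt a s with h | h
    · rw [abs_of_nonneg (by linarith)]; linarith
    · rw [abs_of_neg (by linarith)]; linarith
  linarith

lemma rnd_lower (hp : 2 ≤ p) (hemin : emin ≤ 0) (hemax : 1 ≤ emax) (rnd : ℝ → ℝ)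
    (hrnd : IsRNE (FF p emin emax) ev rnd) {t : ℝ} (ht1 : 1 ≤ t) (ht2 : t ≤ fmax p emax) :
    t - t * (2:ℝ)^(-(p:ℤ)) ≤ rnd t := by
  have htpos : (0:ℝ) < t := by linarith
  have hεpos : (0:ℝ) < (2:ℝ)^(-(p:ℤ)) := by positivity
  set E := Int.log 2 t with hE
  have hE1 : (2:ℝ)^E ≤ t := by
    have h := Int.zpow_log_le_self (b := 2) (r := t) (by norm_num) htpos
    exact_mod_cast h
  have hE2 : t < (2:ℝ)^(E+1) := by
    have h := Int.lt_zpow_succ_log_self (b := 2) (hb := by norm_num) (r := t)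
    exact_mod_cast h
  have hE0 : 0 ≤ E := by
    by_contra h
    push_neg at h
    have h' : (2:ℝ)^(E+1) ≤ (2:ℝ)^(0:ℤ) := zpow_le_zpow_right₀ (by norm_num) (by omega)
    rw [zpow_zero] at h'; linarith
  have hEmax : E ≤ emax := by
    by_contra h
    push_neg at h
    have h' : (2:ℝ)^(emax+1) ≤ (2:ℝ)^E := zpow_le_zpow_right₀ (by norm_num) (by omega)
    have h'' := fmax_lt (p := p) (emax := emax) (by omega)
    linarith
  set δ := (2:ℝ)^(E+1-(p:ℤ)) with hδ
  have hδpos : 0 < δ := by positivity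
  set n := ⌊t / δ⌋ with hn
  have hb1 : (n:ℝ) * δ ≤ t := by
    rw [← le_div_iff₀ hδpos]; exact Int.floor_le _
  have hb2 : t < ((n:ℝ)+1) * δ := by
    rw [← div_lt_iff₀ hδpos]
    exact_mod_cast Int.lt_floor_add_one (t / δ)
  have hn0 : 0 ≤ n := Int.floor_nonneg.2 (by positivity)
  have hnpZ : n < 2^p := by
    have h1 : t / δ < (2:ℝ)^(p:ℤ) := by
      rw [div_lt_iff₀ hδpos, hδ, ← zpow_add₀ two_ne,
        show (p:ℤ) + (E+1-(p:ℤ)) = E+1 by ring]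
      exact hE2
    have h2 : (n:ℝ) < (2:ℝ)^(p:ℤ) := lt_of_le_of_lt (Int.floor_le _) h1
    rw [← cast_two_pow] at h2
    exact_mod_cast h2
  have hbF : ((n:ℝ)) * δ ∈ FF p emin emax :=
    ⟨n, E, by rw [abs_of_nonneg hn0]; exact hnpZ, by omega, hEmax, rfl⟩
  have hδt : δ ≤ 2 * (t * (2:ℝ)^(-(p:ℤ))) := by
    have hδeq : δ = (2:ℝ)^E * (2:ℝ)^(-(p:ℤ)) * 2 := by
      rw [hδ, show E+1-(p:ℤ) = E + -(p:ℤ) + 1 by ring, zpow_add₀ two_ne,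
        zpow_add₀ two_ne, zpow_one]
    rw [hδeq]
    nlinarith
  by_cases hfin : n + 1 = 2^p ∧ E = emax
  · -- t = fmax, exact
    obtain ⟨hf1, hf2⟩ := hfin
    have hnz : n = 2^p - 1 := by omega
    have hnval : (n:ℝ) = ((2^p - 1 : ℤ):ℝ) := by rw [hnz]
    have htf : t = fmax p emax := by
      have : fmax p emax ≤ t := by
        rw [fmax_eq]
        calc ((2^p - 1 : ℤ):ℝ) * (2:ℝ)^(emax + 1 - (p:ℤ)) = (n:ℝ) * δ := by
              rw [hnval, hδ, hf2]
        _ ≤ t := hb1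
      linarith
    have h0 := (hrnd t).2.1 (fmax p emax) (fmax_mem (by omega) hemin (by omega))
    rw [← htf, sub_self, abs_zero] at h0
    have : t = rnd t := by
      have := abs_nonpos_iff.1 h0
      linarith [sub_eq_zero.1 this]
    nlinarith
  · have hcF : ((n:ℝ)+1) * δ ∈ FF p emin emax := by
      rcases lt_or_eq_of_le (by omega : n + 1 ≤ 2^p) with hlt | heq
      · refine ⟨n+1, E, ?_, by omega, hEmax, by push_cast; ring⟩
        rw [abs_of_nonneg (by omega)]; exact hlt
      · have hEem : E < emax := by
          rcases lt_or_eq_of_le hEmax with h | h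
          · exact h
          · exact absurd ⟨heq.symm ▸ rfl, h⟩ hfin
        refine ⟨2^(p-1), E+1, ?_, by omega, by omega, ?_⟩
        · have h2 : (0:ℤ) < 2^(p-1) := by positivity
          rw [abs_of_nonneg (by omega)]
          exact pow_lt_pow_right₀ (by norm_num) (by omega)
        · have hc1 : ((n:ℝ)+1) = (2:ℝ)^(p:ℤ) := by
            rw [← cast_two_pow]
            exact_mod_cast congrArg (fun k : ℤ => (k:ℝ)) heq
          rw [hc1, hδ, cast_two_pow, ← zpow_add₀ two_ne, ← zpow_add₀ two_ne]
          congr 1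
          omega
    have hrb := (hrnd t).2.1 _ hbF
    have hrc := (hrnd t).2.1 _ hcF
    have habsb : |t - (n:ℝ)*δ| = t - (n:ℝ)*δ := abs_of_nonneg (by linarith)
    have habsc : |t - ((n:ℝ)+1)*δ| = ((n:ℝ)+1)*δ - t := by
      rw [abs_sub_comm]; exact abs_of_nonneg (by linarith)
    rw [habsb] at hrb
    rw [habsc] at hrc
    have hle : t - rnd t ≤ |t - rnd t| := le_abs_self _
    have hexp : ((n:ℝ)+1)*δ = (n:ℝ)*δ + δ := by ring
    linarith

end Aux2

/-- For a float `z` with `1 + 2^(1-p) < |z| ≤ f_max`,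
`f_max ⊘ (f_max ⊘ |z|⁻⁻) < |z|`. -/
theorem div_div_pred_pred (p : ℕ) (hp : 2 ≤ p) (emin emax : ℤ)
    (hemin : emin ≤ 0) (hemax : 1 ≤ emax)
    (rnd : ℝ → ℝ)
    (hrnd : IsRNE (FF p emin emax) (evenFF p emin emax) rnd)
    (z : ℝ) (hz : z ∈ FF p emin emax)
    (h1 : 1 + (2 : ℝ) ^ (1 - (p : ℤ)) < |z|) (h2 : |z| ≤ fmax p emax) :
    rnd (fmax p emax /
          rnd (fmax p emax / predF (FF p emin emax) (predF (FF p emin emax) |z|)))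
      < |z| := by
  have hppos : (0:ℝ) < (2:ℝ)^(1-(p:ℤ)) := by positivity
  set x := |z| with hxdef
  have hxF : x ∈ FF p emin emax := abs_mem_FF hz
  have hs1F : 1 + (2:ℝ)^(1-(p:ℤ)) ∈ FF p emin emax := succ_one_mem_FF hp hemin (by omega)
  obtain ⟨haF, hax, hsa⟩ := predF_spec x _ hs1F h1
  set a := predF (FF p emin emax) x with hadef
  have ha1 : 1 < a := by linarith
  obtain ⟨huF, hua, h1u⟩ := predF_spec a 1 (one_mem_FF (p := p) (emin := emin) (emax := emax) (by omega) hemin (by omega)) ha1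
  set u := predF (FF p emin emax) a with hudef
  have hupos : (0:ℝ) < u := by linarith
  set E := Int.log 2 u with hE
  have hE1 : (2:ℝ)^E ≤ u := by
    have h := Int.zpow_log_le_self (b := 2) (r := u) (by norm_num) hupos
    exact_mod_cast h
  have hE2 : u < (2:ℝ)^(E+1) := by
    have h := Int.lt_zpow_succ_log_self (b := 2) (hb := by norm_num) (r := u)
    exact_mod_cast h
  set δ := (2:ℝ)^(E+1-(p:ℤ)) with hδ
  have hδpos : (0:ℝ) < δ := by positivity
  obtain ⟨k, hk⟩ := FF_isMultiple huF hE1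
  obtain ⟨l, hl⟩ := FF_isMultiple haF (le_trans hE1 hua.le)
  obtain ⟨nn, hnn⟩ := FF_isMultiple hxF (le_trans hE1 (by linarith))
  have hkl : k < l := by
    have h' : (k:ℝ)*δ < (l:ℝ)*δ := by rw [← hk, ← hl]; exact hua
    exact_mod_cast (mul_lt_mul_iff_of_pos_right hδpos).1 h'
  have hln : l < nn := by
    have h' : (l:ℝ)*δ < (nn:ℝ)*δ := by rw [← hl, ← hnn]; exact hax
    exact_mod_cast (mul_lt_mul_iff_of_pos_right hδpos).1 h'
  have hau : u + δ ≤ a := by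
    have hc : ((k:ℝ)+1) ≤ (l:ℝ) := by exact_mod_cast hkl
    rw [hk, hl]; nlinarith
  have hxu : u + 2*δ ≤ x := by
    have hc : ((k:ℝ)+2) ≤ (nn:ℝ) := by exact_mod_cast (by omega : k + 2 ≤ nn)
    rw [hk, hnn]; nlinarith
  set ε := (2:ℝ)^(-(p:ℤ)) with hε
  have hεpos : (0:ℝ) < ε := by positivity
  have hεle : ε ≤ 1/4 := by
    rw [hε, show (1/4:ℝ) = (2:ℝ)^(-2:ℤ) by norm_num]
    exact zpow_le_zpow_right₀ (by norm_num) (by omega)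
  have hεu : ε * u < δ := by
    have h' := mul_lt_mul_of_pos_left hE2 hεpos
    have heq : ε * (2:ℝ)^(E+1) = δ := by
      rw [hε, hδ, ← zpow_add₀ two_ne]; congr 1; ring
    linarith
  have hM := fmax_pos (p := p) (emax := emax) (by omega)
  have hufm : u ≤ fmax p emax := by linarith
  set t := fmax p emax / u with ht
  have ht1 : 1 ≤ t := (one_le_div hupos).2 hufm
  have ht2 : t ≤ fmax p emax := div_le_self hM.le h1u
  have hq := rnd_lower hp hemin hemax rnd hrnd ht1 ht2
  set q := rnd t with hqdef
  clear_value x a u E δ ε t q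
  have h1ε : (0:ℝ) < 1 - ε := by linarith
  have hexp : t * (1 - ε) = t - t * ε := by ring
  have hq' : t - t * ε ≤ q := by rw [hε]; exact hq
  have htq : t * (1 - ε) ≤ q := by linarith
  have hpos : 0 < t * (1 - ε) := mul_pos (by linarith) h1ε
  have hqpos : (0:ℝ) < q := lt_of_lt_of_le hpos htq
  have hs : fmax p emax / q ≤ u / (1 - ε) := by
    have hdd : fmax p emax / q ≤ fmax p emax / (t * (1 - ε)) :=
      div_le_div_of_nonneg_left hM.le hpos htq
    have heq : fmax p emax / (t * (1-ε)) = u / (1-ε) := by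
      rw [ht]; field_simp
    linarith
  have hmid : u / (1-ε) < (a + x)/2 := by
    rw [div_lt_iff₀ h1ε]
    have hδε : δ * ε ≤ δ * (1/4) := mul_le_mul_of_nonneg_left hεle hδpos.le
    nlinarith
  exact rnd_lt rnd hrnd haF hax (lt_of_le_of_lt hs hmid)
end
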